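/- arXiv:1211.0419 — 4 statements merged into one kernel-verified Lean document; each statement's English description precedes it below -/
import Mathlib

section
/- Let A ⊆ Y with ∅ ≠ Cl₊A ≠ Y. Then A + Int C = Inf A + Int C. -/
open Set Pointwise

variable {Y : Type*} [AddCommGroup Y] [Module ℝ Y] [TopologicalSpace Y]
  [IsTopologicalAddGroup Y] [ContinuousSMul ℝ Y]

/-- Upper closure of a set with respect to the cone `C`. -/
def upClo (C A : Set Y) : Set Y := closure (A + C)

/-- Weakly minimal elements of `A` with respect to the cone `C`. -/
def wMinSet (C A : Set Y) : Set Y := {y ∈ A | ({y} - interior C) ∩ A = ∅}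

/-- Infimal set of `A` with respect to the cone `C`. -/
def infSet (C A : Set Y) : Set Y := wMinSet C (upClo C A)

lemma smul_int {C : Set Y} (hCone : ∀ r : ℝ, 0 < r → r • C ⊆ C) {r : ℝ} (hr : 0 < r) :
    r • interior C ⊆ interior C :=
  interior_maximal ((smul_set_mono interior_subset).trans (hCone r hr))
    (isOpen_interior.smul₀ hr.ne')

lemma cone_add_self {C : Set Y} (hC : Convex ℝ C)
    (hCone : ∀ r : ℝ, 0 < r → r • C ⊆ C) : C + C ⊆ C := by
  rintro _ ⟨x, hx, y, hy, rfl⟩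
  have h : (1/2 : ℝ) • x + (1/2 : ℝ) • y ∈ C :=
    hC hx hy (by norm_num) (by norm_num) (by norm_num)
  have h2 : (2 : ℝ) • ((1/2 : ℝ) • x + (1/2 : ℝ) • y) ∈ C :=
    hCone 2 (by norm_num) (smul_mem_smul_set h)
  have : (2 : ℝ) • ((1/2 : ℝ) • x + (1/2 : ℝ) • y) = x + y := by
    rw [smul_add, smul_smul, smul_smul]; norm_num
  rwa [this] at h2

lemma cone_add_int {C : Set Y} (hC : Convex ℝ C)
    (hCone : ∀ r : ℝ, 0 < r → r • C ⊆ C) : C + interior C ⊆ interior C :=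
  interior_maximal ((add_subset_add_left interior_subset).trans (cone_add_self hC hCone))
    (isOpen_interior.add_left)

lemma closure_add_int {C : Set Y} (S : Set Y) :
    closure S + interior C ⊆ S + interior C := by
  rintro _ ⟨x, hx, c, hc, rfl⟩
  have hcont : Continuous fun v : Y => x + c - v := by continuity
  have hopen : IsOpen {v : Y | x + c - v ∈ interior C} :=
    isOpen_interior.preimage hcont
  have hxmem : x ∈ {v : Y | x + c - v ∈ interior C} := by simp [hc]
  obtain ⟨s, hs1, hs2⟩ := mem_closure_iff.1 hx _ hopen hxmem
  exact ⟨s, hs2, x + c - s, hs1, by abel⟩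

lemma absorb {C : Set Y} (hCone : ∀ r : ℝ, 0 < r → r • C ⊆ C)
    {c : Y} (hc : c ∈ interior C) (v : Y) :
    ∀ᶠ t : ℝ in Filter.atTop, v + t • c ∈ interior C := by
  have h : Filter.Tendsto (fun t : ℝ => t⁻¹ • v + c) Filter.atTop (nhds c) := by
    have := ((tendsto_inv_atTop_zero (𝕜 := ℝ)).smul_const v).add_const c
    simpa using this
  have hev := h.eventually (isOpen_interior.mem_nhds hc)
  filter_upwards [hev, Filter.eventually_gt_atTop 0] with t ht htpos
  have hmem : t • (t⁻¹ • v + c) ∈ interior C :=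
    smul_int hCone htpos (smul_mem_smul_set ht)
  rwa [smul_add, smul_inv_smul₀ htpos.ne'] at hmem

theorem stmt_2 (C A : Set Y) (hC : Convex ℝ C)
    (hCone : ∀ r : ℝ, 0 < r → r • C ⊆ C)
    (hInt : (interior C).Nonempty) (hIntNe : interior C ≠ univ)
    (h1 : (upClo C A).Nonempty) (h2 : upClo C A ≠ univ) :
    A + interior C = infSet C A + interior C := by
  set B := upClo C A with hBdef
  have hBC : IsClosed B := isClosed_closure
  have key : B + interior C ⊆ A + interior C := by
    calc B + interior C ⊆ (A + C) + interior C := closure_add_int _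
      _ = A + (C + interior C) := add_assoc _ _ _
      _ ⊆ A + interior C := add_subset_add_left (cone_add_int hC hCone)
  have hAB : A + interior C ⊆ B := by
    refine Subset.trans ?_ subset_closure
    exact add_subset_add_left interior_subset
  have hBB : B + interior C ⊆ B := key.trans hAB
  apply Subset.antisymm
  · rintro _ ⟨a, ha, c, hc, rfl⟩
    set T := {t : ℝ | a + c - t • c ∈ B} with hTdef
    have hTclosed : IsClosed T := by
      have hcont : Continuous fun t : ℝ => a + c - t • c := by continuity
      exact hBC.preimage hcont
    have hT01 : ∀ t : ℝ, 0 ≤ t → t < 1 → t ∈ T := by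
      intro t ht ht1
      have h1mem : (1 - t) • c ∈ interior C :=
        smul_int hCone (by linarith) (smul_mem_smul_set hc)
      have hmem : a + (1 - t) • c ∈ A + interior C := ⟨a, ha, _, h1mem, rfl⟩
      have := hAB hmem
      have heq : a + (1 - t) • c = a + c - t • c := by
        rw [sub_smul, one_smul]; abel
      rwa [hTdef, mem_setOf_eq, ← heq]
    have hTne : T.Nonempty := ⟨0, hT01 0 le_rfl one_pos⟩
    have hTbdd : BddAbove T := by
      by_contra hbd
      apply h2
      rw [eq_univ_iff_forall]
      intro w
      have habs := absorb hCone hc (w - (a + c))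
      rw [Filter.eventually_atTop] at habs
      obtain ⟨M, hM⟩ := habs
      rw [not_bddAbove_iff] at hbd
      obtain ⟨t, htT, htM⟩ := hbd M
      have h1' : w - (a + c) + t • c ∈ interior C := hM t htM.le
      have hw : (a + c - t • c) + (w - (a + c) + t • c) ∈ B := hBB ⟨_, htT, _, h1', rfl⟩
      have : (a + c - t • c) + (w - (a + c) + t • c) = w := by abel
      rwa [this] at hw
    set tb := sSup T with htbdef
    have htbT : tb ∈ T := hTclosed.csSup_mem hTne hTbdd
    have htb1 : 1 ≤ tb := by
      by_contra hlt
      push_neg at hlt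
      have h0 : (0:ℝ) ≤ tb := le_csSup hTbdd (hT01 0 le_rfl one_pos)
      have hmid : (tb + 1) / 2 ∈ T := hT01 _ (by linarith) (by linarith)
      have := le_csSup hTbdd hmid
      linarith
    set b := a + c - tb • c with hbdef
    have hbB : b ∈ B := htbT
    have hbmin : b ∈ wMinSet C B := by
      refine ⟨hbB, ?_⟩
      rw [eq_empty_iff_forall_notMem]
      rintro z ⟨hz1, hz2⟩
      rw [mem_sub] at hz1
      obtain ⟨y, hy, d, hd, rfl⟩ := hz1
      rw [mem_singleton_iff] at hy
      subst hy
      -- b - d ∈ B, d ∈ interior C : contradict sup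
      have hsmall : ∀ᶠ ε : ℝ in nhds 0, d - ε • c ∈ interior C := by
        have hcont : Filter.Tendsto (fun ε : ℝ => d - ε • c) (nhds 0) (nhds d) := by
          have : Continuous fun ε : ℝ => d - ε • c := by continuity
          have h0 := this.tendsto 0
          simpa using h0
        exact hcont.eventually (isOpen_interior.mem_nhds hd)
      obtain ⟨ε, hε1, hε2⟩ : ∃ ε : ℝ, 0 < ε ∧ d - ε • c ∈ interior C := by
        have hev := (hsmall.filter_mono (nhdsWithin_le_nhds (s := Ioi (0:ℝ)))).and
          eventually_mem_nhdsWithin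
        obtain ⟨ε, he1, he2⟩ := hev.exists
        exact ⟨ε, he2, he1⟩
      have hmem : (b - d) + (d - ε • c) ∈ B := hBB ⟨_, hz2, _, hε2, rfl⟩
      have heq : (b - d) + (d - ε • c) = a + c - (tb + ε) • c := by
        rw [hbdef, add_smul]; abel
      rw [heq] at hmem
      have : tb + ε ≤ tb := le_csSup hTbdd hmem
      linarith
    have htbc : tb • c ∈ interior C :=
      smul_int hCone (by linarith) (smul_mem_smul_set hc)
    exact ⟨b, hbmin, tb • c, htbc, by rw [hbdef]; simp⟩
  · have hsub : infSet C A ⊆ B := fun y hy => hy.1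
    exact (add_subset_add_right hsub).trans key
end

section
/- Let A ⊆ Y with ∅ ≠ Cl₊A ≠ Y. Then Inf(Inf A) = Inf A, Cl₊(Cl₊A) = Cl₊A, Inf(Cl₊A) = Inf A, and Cl₊(Inf A) = Cl₊A. -/
open Set Pointwise

variable {Y : Type*} [AddCommGroup Y] [Module ℝ Y] [TopologicalSpace Y]
  [IsTopologicalAddGroup Y] [ContinuousSMul ℝ Y]

/-- A convex cone is closed under addition. -/
lemma coneAdd' (C : Set Y) (hC : Convex ℝ C) (hCone : ∀ r : ℝ, 0 < r → r • C ⊆ C)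
    {x y : Y} (hx : x ∈ C) (hy : y ∈ C) : x + y ∈ C := by
  have h : (1/2 : ℝ) • x + (1/2 : ℝ) • y ∈ C :=
    hC hx hy (by norm_num) (by norm_num) (by norm_num)
  have h2 := hCone 2 (by norm_num) (smul_mem_smul_set h)
  have : (2:ℝ) • ((1/2 : ℝ) • x + (1/2 : ℝ) • y) = x + y := by
    rw [smul_add, smul_smul, smul_smul]
    norm_num
  rwa [this] at h2

/-- Any set is contained in the closure of its sum with the cone. -/
lemma subset_closure_add' (C : Set Y) (hCone : ∀ r : ℝ, 0 < r → r • C ⊆ C)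
    {e : Y} (he : e ∈ interior C) (S : Set Y) : S ⊆ closure (S + C) := by
  intro x hx
  have hcont : Filter.Tendsto (fun t : ℝ => x + t • e)
      (nhdsWithin 0 (Set.Ioi 0)) (nhds x) := by
    have hc : Continuous (fun t : ℝ => x + t • e) := by continuity
    have := (hc.tendsto 0).mono_left
      (nhdsWithin_le_nhds : nhdsWithin (0:ℝ) (Set.Ioi 0) ≤ nhds 0)
    simpa using this
  refine mem_closure_of_tendsto hcont ?_
  filter_upwards [self_mem_nhdsWithin] with t ht
  exact Set.add_mem_add hx (hCone t ht (smul_mem_smul_set (interior_subset he)))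

/-- The upper closure absorbs addition by cone elements. -/
lemma upClo_add_subset' (C : Set Y) (hC : Convex ℝ C)
    (hCone : ∀ r : ℝ, 0 < r → r • C ⊆ C) (A : Set Y) :
    upClo C A + C ⊆ upClo C A := by
  rintro _ ⟨x, hx, c, hc, rfl⟩
  refine map_mem_closure (f := fun y => y + c) (continuous_add_right c) hx ?_
  rintro _ ⟨a, ha, d, hd, rfl⟩
  refine ⟨a, ha, d + c, coneAdd' C hC hCone hd hc, ?_⟩
  show a + (d + c) = (a + d) + c
  abel

/-- `closure S + interior C ⊆ S + interior C`. -/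
lemma closure_add_interior' (C S : Set Y) :
    closure S + interior C ⊆ S + interior C := by
  rintro _ ⟨x, hx, u, hu, rfl⟩
  have hopen : {v : Y | u + (x - v) ∈ interior C} ∈ nhds x := by
    have hc : Continuous fun v : Y => u + (x - v) := by continuity
    have h0 : u + (x - x) ∈ interior C := by simpa using hu
    exact hc.continuousAt.preimage_mem_nhds (isOpen_interior.mem_nhds h0)
  obtain ⟨s, hs⟩ := mem_closure_iff_nhds.mp hx _ hopen
  exact ⟨s, hs.2, u + (x - s), hs.1, by abel⟩

/-- The upper closure absorbs addition by interior cone elements. -/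
lemma upClo_add_interior' (C : Set Y) (hC : Convex ℝ C)
    (hCone : ∀ r : ℝ, 0 < r → r • C ⊆ C) (A : Set Y) :
    upClo C A + interior C ⊆ upClo C A := by
  intro x hx
  obtain ⟨y, ⟨a, ha, c, hc, rfl⟩, u, hu, rfl⟩ := closure_add_interior' C (A + C) hx
  exact subset_closure
    ⟨a, ha, c + u, coneAdd' C hC hCone hc (interior_subset hu), (add_assoc _ _ _).symm⟩

/-- The key domination property: every point of the upper closure is in the
closure of `wMinSet + C`, provided the upper closure is not everything. -/
lemma upClo_subset_closure_wMin' (C A : Set Y) (hC : Convex ℝ C)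
    (hCone : ∀ r : ℝ, 0 < r → r • C ⊆ C)
    (hInt : (interior C).Nonempty) (h2 : upClo C A ≠ univ) :
    upClo C A ⊆ closure (wMinSet C (upClo C A) + C) := by
  obtain ⟨e, he⟩ := hInt
  intro b hb
  set B := upClo C A with hB
  have hBclosed : IsClosed B := isClosed_closure
  set T : Set ℝ := {t | b - t • e ∈ B} with hT
  have hT0 : (0:ℝ) ∈ T := by simp [hT, hb]
  have hsm : Continuous fun t : ℝ => t • e :=
    (continuous_id : Continuous fun t : ℝ => t).smul continuous_const
  have hcontT : Continuous fun t : ℝ => b - t • e := continuous_const.sub hsm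
  have hTclosed : IsClosed T := hBclosed.preimage hcontT
  have hTbdd : BddAbove T := by
    by_contra hbdd
    apply h2
    ext y
    simp only [Set.mem_univ, iff_true]
    have htend : Filter.Tendsto (fun t : ℝ => t⁻¹ • (y - b) + e)
        Filter.atTop (nhds e) := by
      have h1 : Filter.Tendsto (fun t : ℝ => t⁻¹ • (y - b)) Filter.atTop (nhds 0) := by
        have h0 : Filter.Tendsto (fun r : ℝ => r⁻¹) Filter.atTop (nhds 0) :=
          tendsto_inv_atTop_zero
        have := h0.smul_const (y - b)
        simpa using this
      simpa using h1.add_const e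
    have hev : ∀ᶠ t in Filter.atTop, t⁻¹ • (y - b) + e ∈ interior C :=
      htend.eventually (isOpen_interior.mem_nhds he)
    have hfreq : ∃ᶠ t in Filter.atTop, t ∈ T := by
      rw [Filter.frequently_atTop]
      intro a
      rcases not_bddAbove_iff.mp hbdd a with ⟨t, htT, hat⟩
      exact ⟨t, le_of_lt hat, htT⟩
    obtain ⟨t, ⟨hint, htpos⟩, htT⟩ :=
      ((hev.and (Filter.eventually_gt_atTop 0)).and_frequently hfreq).exists
    have hmemC : y - b + t • e ∈ C := by
      have h := hCone t htpos (smul_mem_smul_set (interior_subset hint))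
      rwa [smul_add, smul_smul, mul_inv_cancel₀ htpos.ne', one_smul] at h
    have heq : b - t • e + (y - b + t • e) = y := by abel
    exact upClo_add_subset' C hC hCone A ⟨b - t • e, htT, y - b + t • e, hmemC, heq⟩
  set t₀ := sSup T with ht₀
  have ht₀T : t₀ ∈ T := hTclosed.csSup_mem ⟨0, hT0⟩ hTbdd
  have ht₀0 : (0:ℝ) ≤ t₀ := le_csSup hTbdd hT0
  have hw : b - t₀ • e ∈ wMinSet C B := by
    refine ⟨ht₀T, ?_⟩
    rw [Set.eq_empty_iff_forall_notMem]
    rintro x ⟨hx1, hx2⟩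
    obtain ⟨w, hwmem, d, hd, rfl⟩ := hx1
    rw [Set.mem_singleton_iff] at hwmem
    subst hwmem
    have hcont : Filter.Tendsto (fun s : ℝ => d - s • e)
        (nhdsWithin 0 (Set.Ioi 0)) (nhds d) := by
      have hc : Continuous fun s : ℝ => d - s • e := by continuity
      have := (hc.tendsto 0).mono_left
        (nhdsWithin_le_nhds : nhdsWithin (0:ℝ) (Set.Ioi 0) ≤ nhds 0)
      simpa using this
    have hev : ∀ᶠ s in nhdsWithin (0:ℝ) (Set.Ioi 0), d - s • e ∈ interior C :=
      hcont.eventually (isOpen_interior.mem_nhds hd)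
    obtain ⟨s, hsd, hspos⟩ := (hev.and self_mem_nhdsWithin).exists
    have hmem : b - (t₀ + s) • e ∈ B := by
      have h := upClo_add_interior' C hC hCone A (Set.add_mem_add hx2 hsd)
      have heq : (b - t₀ • e - d) + (d - s • e) = b - (t₀ + s) • e := by
        rw [add_smul]; abel
      rwa [heq] at h
    have hle : t₀ + s ≤ t₀ := le_csSup hTbdd hmem
    have : (0:ℝ) < s := hspos
    linarith
  rcases eq_or_lt_of_le ht₀0 with h0 | h0
  · have hb' : b ∈ wMinSet C B := by
      rwa [← h0, zero_smul, sub_zero] at hw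
    exact subset_closure_add' C hCone he _ hb'
  · have heq : b - t₀ • e + t₀ • e = b := by abel
    exact subset_closure
      ⟨b - t₀ • e, hw, t₀ • e,
        hCone t₀ h0 (smul_mem_smul_set (interior_subset he)), heq⟩

theorem stmt_8 (C A : Set Y) (hC : Convex ℝ C)
    (hCone : ∀ r : ℝ, 0 < r → r • C ⊆ C)
    (hInt : (interior C).Nonempty) (hIntNe : interior C ≠ univ)
    (h1 : (upClo C A).Nonempty) (h2 : upClo C A ≠ univ) :
    infSet C (infSet C A) = infSet C A ∧
    upClo C (upClo C A) = upClo C A ∧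
    infSet C (upClo C A) = infSet C A ∧
    upClo C (infSet C A) = upClo C A := by
  obtain ⟨e, he⟩ := hInt
  have claim2 : upClo C (upClo C A) = upClo C A := by
    apply Set.Subset.antisymm
    · have h := upClo_add_subset' C hC hCone A
      calc closure (upClo C A + C) ⊆ closure (upClo C A) := closure_mono h
        _ = upClo C A := isClosed_closure.closure_eq
    · exact subset_closure_add' C hCone he (upClo C A)
  have claim4 : upClo C (infSet C A) = upClo C A := by
    apply Set.Subset.antisymm
    · have hsub : wMinSet C (upClo C A) + C ⊆ upClo C A := by
        intro x hx
        apply upClo_add_subset' C hC hCone A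
        obtain ⟨w, hw, c, hc, rfl⟩ := hx
        exact ⟨w, hw.1, c, hc, rfl⟩
      calc closure (wMinSet C (upClo C A) + C) ⊆ closure (upClo C A) := closure_mono hsub
        _ = upClo C A := isClosed_closure.closure_eq
    · exact upClo_subset_closure_wMin' C A hC hCone ⟨e, he⟩ h2
  refine ⟨?_, claim2, ?_, claim4⟩
  · show wMinSet C (upClo C (infSet C A)) = infSet C A
    rw [claim4]; rfl
  · show wMinSet C (upClo C (upClo C A)) = infSet C A
    rw [claim2]; rfl
end

section
/- Weak duality for the vector Lagrangian: with φ(u*) := Inf ⋃_{x∈X} L(x,u*) where L(x,u*) = F(x) + Inf ⋃_{u∈G(x)+D} ⟨u*,u⟩{c}, one has Sup ⋃_{u*∈U*} φ(u*) ≼ Inf ⋃_{x∈S} F(x), where S = { x : G(x) ∩ (−D) ≠ ∅ }. -/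
open Set Pointwise
open scoped Classical

/-- The extended space `Y ∪ {-∞, +∞}`. -/
abbrev EY (Y : Type*) := WithBot (WithTop Y)

/-- Embedding of `Y` into the extended space. -/
def toE {Y : Type*} (y : Y) : EY Y := ((y : WithTop Y) : EY Y)

/-- The element `+∞` of the extended space. -/
def posInf (Y : Type*) : EY Y := ((⊤ : WithTop Y) : EY Y)

variable {Y : Type*} [AddCommGroup Y] [Module ℝ Y] [TopologicalSpace Y]
  [IsTopologicalAddGroup Y] [ContinuousSMul ℝ Y]

/-- Weakly maximal elements with respect to the cone `C`. -/
def wMaxSet (C A : Set Y) : Set Y := {y ∈ A | ({y} + interior C) ∩ A = ∅}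

/-- Upper closure (w.r.t. `C`) of a subset of the extended space. -/
noncomputable def upCloE (C : Set Y) (A : Set (EY Y)) : Set Y :=
  if (⊥ : EY Y) ∈ A then univ
  else if A = {posInf Y} then ∅
  else closure (toE ⁻¹' A + C)

/-- Infimal set (w.r.t. `C`) of a subset of the extended space. -/
noncomputable def infSE (C : Set Y) (A : Set (EY Y)) : Set (EY Y) :=
  if upCloE C A = univ then {⊥}
  else if upCloE C A = ∅ then {posInf Y}
  else toE '' wMinSet C (upCloE C A)

/-- Lower closure (w.r.t. `C`) of a subset of the extended space. -/
noncomputable def loCloE (C : Set Y) (A : Set (EY Y)) : Set Y :=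
  if posInf Y ∈ A then univ
  else if A = {(⊥ : EY Y)} then ∅
  else closure (toE ⁻¹' A - C)

/-- Supremal set (w.r.t. `C`) of a subset of the extended space. -/
noncomputable def supSE (C : Set Y) (A : Set (EY Y)) : Set (EY Y) :=
  if loCloE C A = univ then {posInf Y}
  else if loCloE C A = ∅ then {(⊥ : EY Y)}
  else toE '' wMaxSet C (loCloE C A)

variable {X U : Type*} [AddCommGroup X] [Module ℝ X]
  [AddCommGroup U] [Module ℝ U] [TopologicalSpace U] [IsTopologicalAddGroup U]
  [ContinuousSMul ℝ U] [T2Space U] [LocallyConvexSpace ℝ U]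

/-- The Lagrangian of the primal problem, for the fixed vector `c ∈ int C`. -/
noncomputable def lagr (C : Set Y) (c : Y) (F : X → Set (EY Y)) (G : X → Set U)
    (D : Set U) (x : X) (u' : U →L[ℝ] ℝ) : Set (EY Y) :=
  F x + infSE C (⋃ u ∈ G x + D, ({toE (u' u • c)} : Set (EY Y)))

/-- The dual objective function. -/
noncomputable def dualObj (C : Set Y) (c : Y) (F : X → Set (EY Y)) (G : X → Set U)
    (D : Set U) (u' : U →L[ℝ] ℝ) : Set (EY Y) :=
  infSE C (⋃ x : X, lagr C c F G D x u')

/-- The feasible set `S = {x : G(x) ∩ (-D) ≠ ∅}`. -/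
def feas (G : X → Set U) (D : Set U) : Set X := {x | (G x ∩ (-D)).Nonempty}

/-- The perturbation map `W`. -/
noncomputable def pertW (C : Set Y) (F : X → Set (EY Y)) (G : X → Set U)
    (D : Set U) (u : U) : Set (EY Y) :=
  infSE C (⋃ x ∈ {x : X | (G x ∩ (-D - {u})).Nonempty}, F x)

section Helpers

variable {Z : Type*} [AddCommGroup Z] [Module ℝ Z] [TopologicalSpace Z]
  [IsTopologicalAddGroup Z] [ContinuousSMul ℝ Z]

lemma toE_injective : Function.Injective (toE (Y := Z)) := by
  intro a b h
  simpa [toE] using h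

lemma toE_ne_bot (y : Z) : toE y ≠ (⊥ : EY Z) := by simp [toE]

lemma toE_ne_posInf (y : Z) : toE y ≠ posInf Z := by simp [toE, posInf]

lemma toE_add (y z : Z) : toE (y + z) = toE y + toE z := by
  simp [toE]

lemma notMem_image_toE_bot (S : Set Z) : (⊥ : EY Z) ∉ toE '' S := by
  rintro ⟨y, -, h⟩; exact toE_ne_bot y h

lemma image_toE_ne_posInf (S : Set Z) : toE '' S ≠ {posInf Z} := by
  intro h
  have : posInf Z ∈ toE '' S := h ▸ mem_singleton _
  rcases this with ⟨y, -, hy⟩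
  exact toE_ne_posInf y hy

variable {C : Set Z}

lemma cone_add (hC : Convex ℝ C) (hCone : ∀ r : ℝ, 0 < r → r • C ⊆ C) :
    ∀ a ∈ C, ∀ b ∈ C, a + b ∈ C := by
  intro a ha b hb
  have hm : (1/2 : ℝ) • a + (1/2 : ℝ) • b ∈ C :=
    hC ha hb (by norm_num) (by norm_num) (by norm_num)
  have h2 : (2:ℝ) • ((1/2 : ℝ) • a + (1/2 : ℝ) • b) ∈ C :=
    hCone 2 (by norm_num) (smul_mem_smul_set hm)
  have : (2:ℝ) • ((1/2 : ℝ) • a + (1/2 : ℝ) • b) = a + b := by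
    rw [smul_add, smul_smul, smul_smul]; norm_num
  rwa [this] at h2

lemma smul_mem_interior (hCone : ∀ r : ℝ, 0 < r → r • C ⊆ C)
    {c : Z} (hc : c ∈ interior C) {r : ℝ} (hr : 0 < r) : r • c ∈ interior C := by
  have h1 : r • c ∈ r • interior C := smul_mem_smul_set hc
  rw [← interior_smul₀ (ne_of_gt hr)] at h1
  exact interior_mono (hCone r hr) h1

lemma interior_add_cone (hC : Convex ℝ C) (hCone : ∀ r : ℝ, 0 < r → r • C ⊆ C) :
    ∀ a ∈ interior C, ∀ b ∈ C, a + b ∈ interior C := by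
  intro a ha b hb
  have hsub : interior C + C ⊆ C := by
    rintro p ⟨u, hu, v, hv, rfl⟩
    exact cone_add hC hCone u (interior_subset hu) v hv
  have hopen : IsOpen (interior C + C) := IsOpen.add_right isOpen_interior
  exact interior_maximal hsub hopen (add_mem_add ha hb)

lemma ray_mem_closure {c : Z} {S : Set Z} {b : Z}
    (h : ∀ ε : ℝ, 0 < ε → b + ε • c ∈ S) : b ∈ closure S := by
  have ht : Filter.Tendsto (fun n : ℕ => b + ((n:ℝ)+1)⁻¹ • c) Filter.atTop
      (nhds (b + (0:ℝ) • c)) := by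
    apply Filter.Tendsto.const_add
    exact (Filter.Tendsto.smul_const (tendsto_one_div_add_atTop_nhds_zero_nat.congr
      (by intro n; rw [one_div])) c)
  rw [zero_smul, add_zero] at ht
  exact mem_closure_of_tendsto ht (Filter.Eventually.of_forall fun n =>
    h _ (by positivity))

lemma zero_mem_ucone (hCone : ∀ r : ℝ, 0 < r → r • C ⊆ C) {c : Z} (hc : c ∈ interior C) :
    (0:Z) ∈ closure C := by
  have := ray_mem_closure (c := c) (S := C) (b := 0) (fun ε hε => by
    simpa using interior_subset (smul_mem_interior hCone hc hε))
  exact this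

lemma exists_ray_in_cone (hCone : ∀ r : ℝ, 0 < r → r • C ⊆ C)
    {c : Z} (hc : c ∈ interior C) (v : Z) : ∃ t : ℝ, 0 < t ∧ v + t • c ∈ C := by
  have ht : Filter.Tendsto (fun t : ℝ => c + t⁻¹ • v) Filter.atTop
      (nhds (c + (0:ℝ) • v)) :=
    Filter.Tendsto.const_add c (tendsto_inv_atTop_zero.smul_const v)
  rw [zero_smul, add_zero] at ht
  have hev : ∀ᶠ t : ℝ in Filter.atTop, c + t⁻¹ • v ∈ interior C :=
    ht.eventually_mem (isOpen_interior.mem_nhds hc)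
  obtain ⟨t, htI, ht0⟩ := (hev.and (Filter.eventually_gt_atTop 0)).exists
  refine ⟨t, ht0, ?_⟩
  have h1 : t • (c + t⁻¹ • v) ∈ C :=
    hCone t ht0 (smul_mem_smul_set (interior_subset htI))
  have h2 : t • (c + t⁻¹ • v) = v + t • c := by
    rw [smul_add, smul_smul, mul_inv_cancel₀ (ne_of_gt ht0), one_smul]; abel
  rwa [h2] at h1

lemma exists_small_shift {c : Z} {d : Z} (hd : d ∈ interior C) :
    ∃ ε : ℝ, 0 < ε ∧ d - ε • c ∈ interior C := by
  have ht : Filter.Tendsto (fun n : ℕ => d - ((n:ℝ)+1)⁻¹ • c) Filter.atTop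
      (nhds (d - (0:ℝ) • c)) := by
    apply Filter.Tendsto.const_sub
    exact Filter.Tendsto.smul_const (tendsto_one_div_add_atTop_nhds_zero_nat.congr
      (by intro n; rw [one_div])) c
  rw [zero_smul, sub_zero] at ht
  obtain ⟨n, hn⟩ := (ht.eventually_mem (isOpen_interior.mem_nhds hd)).exists
  exact ⟨((n:ℝ)+1)⁻¹, by positivity, hn⟩

lemma dominationMin (hC : Convex ℝ C) (hCone : ∀ r : ℝ, 0 < r → r • C ⊆ C)
    {c : Z} (hc : c ∈ interior C) {B : Set Z} (hB : IsClosed B)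
    (hadd : ∀ b ∈ B, ∀ k ∈ C, b + k ∈ B) (hne : B ≠ univ) :
    ∀ b ∈ B, b ∈ closure (wMinSet C B + C) := by
  intro b hb
  set T : Set ℝ := {t : ℝ | b - t • c ∈ B} with hT
  have hT0 : (0:ℝ) ∈ T := by simp [hT, hb]
  have hdown : ∀ {t t' : ℝ}, t ∈ T → t' ≤ t → t' ∈ T := by
    intro t t' ht h
    rcases eq_or_lt_of_le h with rfl | h
    · exact ht
    · have he : b - t' • c = (b - t • c) + (t - t') • c := by module
      have : b - t' • c ∈ B := by
        rw [he]
        exact hadd _ ht _ (interior_subset (smul_mem_interior hCone hc (sub_pos.2 h)))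
      exact this
  have hbdd : BddAbove T := by
    by_contra hbdd
    apply hne
    rw [eq_univ_iff_forall]
    intro z
    obtain ⟨t, ht0, htc⟩ := exists_ray_in_cone hCone hc (z - b)
    obtain ⟨s, hs, hts⟩ := not_bddAbove_iff.1 hbdd t
    have htT : t ∈ T := hdown hs (le_of_lt hts)
    have := hadd _ htT _ htc
    have he : (b - t • c) + (z - b + t • c) = z := by module
    rwa [he] at this
  have hTcl : IsClosed T := hB.preimage (by fun_prop)
  set t₁ := sSup T with ht₁def
  have ht₁ : t₁ ∈ T := hTcl.csSup_mem ⟨0, hT0⟩ hbdd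
  set m := b - t₁ • c with hm_def
  have hm : m ∈ B := ht₁
  have hwmin : m ∈ wMinSet C B := by
    refine ⟨hm, ?_⟩
    rw [eq_empty_iff_forall_notMem]
    rintro p ⟨⟨a, ha, d, hd, rfl⟩, hpB⟩
    rw [mem_singleton_iff] at ha; subst ha
    obtain ⟨ε, hε, hdc⟩ := exists_small_shift (c := c) hd
    have h1 : (m - d) + (d - ε • c) ∈ B := hadd _ hpB _ (interior_subset hdc)
    have he : (m - d) + (d - ε • c) = b - (t₁ + ε) • c := by
      rw [hm_def]; module
    rw [he] at h1
    have : t₁ + ε ≤ t₁ := le_csSup hbdd h1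
    linarith
  have ht₁0 : 0 ≤ t₁ := le_csSup hbdd hT0
  apply ray_mem_closure (c := c)
  intro ε hε
  have he : b + ε • c = m + (t₁ + ε) • c := by rw [hm_def]; module
  rw [he]
  exact add_mem_add hwmin (interior_subset (smul_mem_interior hCone hc (by linarith)))

lemma dominationMax (hC : Convex ℝ C) (hCone : ∀ r : ℝ, 0 < r → r • C ⊆ C)
    {c : Z} (hc : c ∈ interior C) {B : Set Z} (hB : IsClosed B)
    (hsub : ∀ b ∈ B, ∀ k ∈ C, b - k ∈ B) (hne : B ≠ univ) (hnem : B.Nonempty) :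
    ∀ y, y ∉ interior B → y ∈ closure (wMaxSet C B + C) := by
  intro y hy
  set T : Set ℝ := {t : ℝ | y + t • c ∈ B} with hT
  obtain ⟨b, hb⟩ := hnem
  have hTne : T.Nonempty := by
    obtain ⟨t, ht0, htc⟩ := exists_ray_in_cone hCone hc (b - y)
    refine ⟨-t, ?_⟩
    have h1 : b - ((b - y) + t • c) ∈ B := hsub _ hb _ htc
    have he : b - ((b - y) + t • c) = y + (-t) • c := by module
    rwa [he] at h1
  have hdown : ∀ {t t' : ℝ}, t ∈ T → t' ≤ t → t' ∈ T := by
    intro t t' ht h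
    rcases eq_or_lt_of_le h with rfl | h
    · exact ht
    · have he : y + t' • c = (y + t • c) - (t - t') • c := by module
      have : y + t' • c ∈ B := by
        rw [he]
        exact hsub _ ht _ (interior_subset (smul_mem_interior hCone hc (sub_pos.2 h)))
      exact this
  have hbdd : BddAbove T := by
    by_contra hbdd
    apply hne
    rw [eq_univ_iff_forall]
    intro z
    obtain ⟨t, ht0, htc⟩ := exists_ray_in_cone hCone hc (y - z)
    obtain ⟨s, hs, hts⟩ := not_bddAbove_iff.1 hbdd t
    have htT : t ∈ T := hdown hs (le_of_lt hts)
    have := hsub _ htT _ htc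
    have he : (y + t • c) - (y - z + t • c) = z := by module
    rwa [he] at this
  have hTcl : IsClosed T := hB.preimage (by fun_prop)
  set t₁ := sSup T with ht₁def
  have ht₁ : t₁ ∈ T := hTcl.csSup_mem hTne hbdd
  set m := y + t₁ • c with hm_def
  have hm : m ∈ B := ht₁
  have hwmax : m ∈ wMaxSet C B := by
    refine ⟨hm, ?_⟩
    rw [eq_empty_iff_forall_notMem]
    rintro p ⟨⟨a, ha, d, hd, rfl⟩, hpB⟩
    rw [mem_singleton_iff] at ha; subst ha
    obtain ⟨ε, hε, hdc⟩ := exists_small_shift (c := c) hd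
    have h1 : (m + d) - (d - ε • c) ∈ B := hsub _ hpB _ (interior_subset hdc)
    have he : (m + d) - (d - ε • c) = y + (t₁ + ε) • c := by
      rw [hm_def]; module
    rw [he] at h1
    have : t₁ + ε ≤ t₁ := le_csSup hbdd h1
    linarith
  have ht₁0 : t₁ ≤ 0 := by
    by_contra h
    push_neg at h
    apply hy
    have hO : IsOpen ({m} - interior C) := IsOpen.sub_left isOpen_interior
    have hOB : {m} - interior C ⊆ B := by
      rintro p ⟨a, ha, d, hd, rfl⟩
      rw [mem_singleton_iff] at ha; subst ha
      exact hsub _ hm _ (interior_subset hd)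
    have hyO : y ∈ {m} - interior C := by
      refine ⟨m, mem_singleton _, t₁ • c, smul_mem_interior hCone hc h, ?_⟩
      rw [hm_def]; exact add_sub_cancel_right y (t₁ • c)
    exact interior_maximal hOB hO hyO
  apply ray_mem_closure (c := c)
  intro ε hε
  have he : y + ε • c = m + (ε - t₁) • c := by rw [hm_def]; module
  rw [he]
  exact add_mem_add hwmax (interior_subset (smul_mem_interior hCone hc (by linarith)))

lemma upCloE_isClosed (A : Set (EY Z)) : IsClosed (upCloE C A) := by
  unfold upCloE
  split_ifs <;>
    first
      | exact isClosed_univ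
      | exact isClosed_empty
      | exact isClosed_closure

lemma upCloE_add (hC : Convex ℝ C) (hCone : ∀ r : ℝ, 0 < r → r • C ⊆ C)
    (A : Set (EY Z)) : ∀ b ∈ upCloE C A, ∀ k ∈ C, b + k ∈ upCloE C A := by
  intro b hb k hk
  unfold upCloE at hb ⊢
  split_ifs at hb ⊢ with h1 h2
  · trivial
  · exact absurd hb (notMem_empty b)
  · have hmap := image_closure_subset_closure_image (f := fun z : Z => z + k)
      (s := toE ⁻¹' A + C) (by fun_prop)
    have hbk : b + k ∈ (fun z : Z => z + k) '' closure (toE ⁻¹' A + C) := ⟨b, hb, rfl⟩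
    have hsub : (fun z : Z => z + k) '' (toE ⁻¹' A + C) ⊆ toE ⁻¹' A + C := by
      rintro p ⟨q, ⟨t, ht, c', hc', rfl⟩, rfl⟩
      exact ⟨t, ht, c' + k, cone_add hC hCone _ hc' _ hk, (add_assoc _ _ _).symm⟩
    exact closure_mono hsub (hmap hbk)

lemma closure_sub_cone (hC : Convex ℝ C) (hCone : ∀ r : ℝ, 0 < r → r • C ⊆ C)
    (T : Set Z) : ∀ b ∈ closure (T - C), ∀ k ∈ C, b - k ∈ closure (T - C) := by
  intro b hb k hk
  have hmap := image_closure_subset_closure_image (f := fun z : Z => z - k)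
    (s := T - C) (by fun_prop)
  have hbk : b - k ∈ (fun z : Z => z - k) '' closure (T - C) := ⟨b, hb, rfl⟩
  have hsub : (fun z : Z => z - k) '' (T - C) ⊆ T - C := by
    rintro p ⟨q, ⟨t, ht, c', hc', rfl⟩, rfl⟩
    refine ⟨t, ht, c' + k, cone_add hC hCone _ hc' _ hk, ?_⟩
    show t - (c' + k) = t - c' - k
    exact sub_add_eq_sub_sub t c' k
  exact closure_mono hsub (hmap hbk)

lemma mem_upCloE_of_toE_mem (hCone : ∀ r : ℝ, 0 < r → r • C ⊆ C)
    {c : Z} (hc : c ∈ interior C) (A : Set (EY Z)) :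
    ∀ y : Z, toE y ∈ A → y ∈ upCloE C A := by
  intro y hy
  unfold upCloE
  split_ifs with h1 h2
  · trivial
  · rw [h2, mem_singleton_iff] at hy
    exact absurd hy (toE_ne_posInf y)
  · exact ray_mem_closure (c := c) fun ε hε =>
      add_mem_add (show y ∈ toE ⁻¹' A from hy)
        (interior_subset (smul_mem_interior hCone hc hε))

lemma upCloE_singleton_bot : upCloE C ({⊥} : Set (EY Z)) = univ := by
  unfold upCloE
  rw [if_pos (mem_singleton _)]

lemma upCloE_singleton_posInf : upCloE C ({posInf Z} : Set (EY Z)) = ∅ := by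
  unfold upCloE
  rw [if_neg (by simp only [mem_singleton_iff, posInf]; exact WithBot.bot_ne_coe), if_pos rfl]

lemma upCloE_image_toE (S : Set Z) : upCloE C (toE '' S) = closure (S + C) := by
  unfold upCloE
  rw [if_neg (notMem_image_toE_bot S), if_neg (image_toE_ne_posInf S),
    preimage_image_eq S toE_injective]

lemma wMinSet_nonempty (hC : Convex ℝ C) (hCone : ∀ r : ℝ, 0 < r → r • C ⊆ C)
    {c : Z} (hc : c ∈ interior C) {B : Set Z} (hB : IsClosed B)
    (hadd : ∀ b ∈ B, ∀ k ∈ C, b + k ∈ B) (hne : B ≠ univ) (hnem : B.Nonempty) :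
    (wMinSet C B).Nonempty := by
  obtain ⟨b, hb⟩ := hnem
  have hmem := dominationMin hC hCone hc hB hadd hne b hb
  rcases eq_empty_or_nonempty (wMinSet C B) with h | h
  · rw [h] at hmem
    simp only [Set.empty_add, closure_empty, mem_empty_iff_false] at hmem
  · exact h

lemma infSE_nonempty (hC : Convex ℝ C) (hCone : ∀ r : ℝ, 0 < r → r • C ⊆ C)
    {c : Z} (hc : c ∈ interior C) (A : Set (EY Z)) : (infSE C A).Nonempty := by
  unfold infSE
  split_ifs with h1 h2
  · exact singleton_nonempty _
  · exact singleton_nonempty _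
  · exact ((wMinSet_nonempty hC hCone hc (upCloE_isClosed A)
      (upCloE_add hC hCone A) h1 (nonempty_iff_ne_empty.2 h2)).image _)

lemma upCloE_infSE (hC : Convex ℝ C) (hCone : ∀ r : ℝ, 0 < r → r • C ⊆ C)
    {c : Z} (hc : c ∈ interior C) (A : Set (EY Z)) :
    upCloE C (infSE C A) = upCloE C A := by
  unfold infSE
  split_ifs with h1 h2
  · rw [h1, upCloE_singleton_bot]
  · rw [h2, upCloE_singleton_posInf]
  · rw [upCloE_image_toE]
    apply subset_antisymm
    · apply closure_minimal _ (upCloE_isClosed A)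
      rintro p ⟨w, hw, k, hk, rfl⟩
      exact upCloE_add hC hCone A _ hw.1 _ hk
    · intro b hb
      exact dominationMin hC hCone hc (upCloE_isClosed A)
        (upCloE_add hC hCone A) h1 b hb

end Helpers

section Main

variable {C : Set Y} {c : Y}

lemma primal_subset_upCloE_lagr
    (hC : Convex ℝ C) (hCone : ∀ r : ℝ, 0 < r → r • C ⊆ C) (hc : c ∈ interior C)
    (F : X → Set (EY Y)) (G : X → Set U) (D : Set U) (u' : U →L[ℝ] ℝ) :
    upCloE C (⋃ x ∈ feas G D, F x) ⊆ upCloE C (⋃ x : X, lagr C c F G D x u') := by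
  set M : Set (EY Y) := ⋃ x : X, lagr C c F G D x u' with hM
  -- facts about the inner union for feasible x
  have hNfacts : ∀ x ∈ feas G D,
      toE (0:Y) ∈ (⋃ u ∈ G x + D, ({toE (u' u • c)} : Set (EY Y))) := by
    intro x hx
    obtain ⟨u, huG, huD⟩ := hx
    have h0GD : (0:U) ∈ G x + D := by
      have := add_mem_add huG (Set.mem_neg.1 huD)
      simpa using this
    refine mem_biUnion h0GD ?_
    simp
  -- pointwise membership lemma
  have hpoint : ∀ x ∈ feas G D, ∀ y : Y, toE y ∈ F x → y ∈ upCloE C M := by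
    intro x hx y hyF
    set N : Set (EY Y) := ⋃ u ∈ G x + D, ({toE (u' u • c)} : Set (EY Y)) with hN
    have h0N : toE (0:Y) ∈ N := hNfacts x hx
    have h0B₂ : (0:Y) ∈ upCloE C N := mem_upCloE_of_toE_mem hCone hc N 0 h0N
    have hlagr : lagr C c F G D x u' = F x + infSE C N := rfl
    by_cases hU : upCloE C N = univ
    · -- infSE C N = {⊥}
      have hinf : infSE C N = {(⊥ : EY Y)} := by unfold infSE; rw [if_pos hU]
      have hbotM : (⊥ : EY Y) ∈ M := by
        refine mem_iUnion.2 ⟨x, ?_⟩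
        rw [hlagr, hinf]
        have : toE y + (⊥ : EY Y) ∈ F x + {(⊥ : EY Y)} :=
          add_mem_add hyF (mem_singleton _)
        rwa [WithBot.add_bot] at this
      unfold upCloE
      rw [if_pos hbotM]
      trivial
    · have hUne : upCloE C N ≠ ∅ := fun h => by
        rw [h] at h0B₂; exact notMem_empty _ h0B₂
      have hinf : infSE C N = toE '' wMinSet C (upCloE C N) := by
        unfold infSE; rw [if_neg hU, if_neg hUne]
      set W := wMinSet C (upCloE C N) with hW
      have hWsub : ∀ w ∈ W, toE (y + w) ∈ M := by
        intro w hw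
        refine mem_iUnion.2 ⟨x, ?_⟩
        rw [hlagr, hinf, toE_add]
        exact add_mem_add hyF (mem_image_of_mem _ hw)
      have h0cl : (0:Y) ∈ closure (W + C) :=
        dominationMin hC hCone hc (upCloE_isClosed N) (upCloE_add hC hCone N) hU 0 h0B₂
      unfold upCloE
      split_ifs with hb1 hb2
      · trivial
      · obtain ⟨w, hw⟩ := wMinSet_nonempty hC hCone hc (upCloE_isClosed N)
          (upCloE_add hC hCone N) hU ⟨0, h0B₂⟩
        have := hWsub w hw
        rw [hb2, mem_singleton_iff] at this
        exact absurd this (toE_ne_posInf _)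
      · have hmap := image_closure_subset_closure_image (f := fun z : Y => y + z)
          (s := W + C) (by fun_prop)
        have hy0 : y ∈ (fun z : Y => y + z) '' closure (W + C) := ⟨0, h0cl, add_zero y⟩
        have hsub : (fun z : Y => y + z) '' (W + C) ⊆ toE ⁻¹' M + C := by
          rintro p ⟨q, ⟨w, hw, k, hk, rfl⟩, rfl⟩
          exact ⟨y + w, hWsub w hw, k, hk, by exact add_assoc y w k⟩
        exact closure_mono hsub (hmap hy0)
  -- bottom lemma
  have hbot : ∀ x ∈ feas G D, (⊥ : EY Y) ∈ F x → upCloE C M = univ := by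
    intro x hx hbF
    set N : Set (EY Y) := ⋃ u ∈ G x + D, ({toE (u' u • c)} : Set (EY Y)) with hN
    obtain ⟨n, hn⟩ := infSE_nonempty hC hCone hc N
    have hbotM : (⊥ : EY Y) ∈ M := by
      refine mem_iUnion.2 ⟨x, ?_⟩
      have : (⊥ : EY Y) + n ∈ F x + infSE C N := add_mem_add hbF hn
      rwa [WithBot.bot_add] at this
    unfold upCloE
    rw [if_pos hbotM]
  -- assemble
  set A : Set (EY Y) := ⋃ x ∈ feas G D, F x with hA
  by_cases hbA : (⊥ : EY Y) ∈ A
  · obtain ⟨x, hx, hF⟩ := mem_iUnion₂.1 hbA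
    rw [hbot x hx hF]
    exact subset_univ _
  · by_cases hA2 : A = {posInf Y}
    · unfold upCloE
      rw [if_neg hbA, if_pos hA2]
      exact empty_subset _
    · have hform : upCloE C A = closure (toE ⁻¹' A + C) := by
        unfold upCloE; rw [if_neg hbA, if_neg hA2]
      rw [hform]
      apply closure_minimal _ (upCloE_isClosed M)
      rintro p ⟨z, hz, k, hk, rfl⟩
      obtain ⟨x, hx, hzF⟩ := mem_iUnion₂.1 hz
      exact upCloE_add hC hCone M _ (hpoint x hx z hzF) _ hk

end Main

/-- Weak duality for the vector Lagrangian: the dual value is `≼` the primal value,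
where `A ≼ B ⇔ Cl₊ A ⊇ Cl₊ B`. -/
theorem stmt_15 (C : Set Y) (c : Y) (hC : Convex ℝ C)
    (hCone : ∀ r : ℝ, 0 < r → r • C ⊆ C)
    (hInt : (interior C).Nonempty) (hIntNe : interior C ≠ univ)
    (hc : c ∈ interior C)
    (F : X → Set (EY Y)) (G : X → Set U) (D : Set U)
    (hDcl : IsClosed D) (hDconv : Convex ℝ D)
    (hDcone : ∀ r : ℝ, 0 < r → r • D ⊆ D)
    (hDint : (interior D).Nonempty) (hDproper : D ≠ univ) :
    upCloE C (infSE C (⋃ x ∈ feas G D, F x)) ⊆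
      upCloE C (supSE C (⋃ u' : U →L[ℝ] ℝ, dualObj C c F G D u')) := by
  rw [upCloE_infSE hC hCone hc]
  set Q : Set (EY Y) := ⋃ u' : U →L[ℝ] ℝ, dualObj C c F G D u' with hQ
  set P₀ : Set Y := upCloE C (⋃ x ∈ feas G D, F x) with hP₀
  -- separation: points of Q are weakly minimal over every Lagrangian upper closure
  have hsep : ∀ y ∈ P₀, ∀ z : Y, toE z ∈ Q → z ∉ ({y} + interior C) := by
    intro y hy z hz hzy
    obtain ⟨u', hz'⟩ := mem_iUnion.1 hz
    have hyW : y ∈ upCloE C (⋃ x : X, lagr C c F G D x u') :=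
      primal_subset_upCloE_lagr hC hCone hc F G D u' hy
    unfold dualObj infSE at hz'
    split_ifs at hz' with g1 g2
    · exact toE_ne_bot z (mem_singleton_iff.1 hz')
    · exact toE_ne_posInf z (mem_singleton_iff.1 hz')
    · obtain ⟨w, hw, hwe⟩ := hz'
      have hwz : w = z := toE_injective hwe
      rw [hwz] at hw
      rcases hzy with ⟨a, ha, d, hd, hadw⟩
      rw [mem_singleton_iff] at ha
      have hymem : y ∈ ({z} - interior C) ∩ upCloE C (⋃ x : X, lagr C c F G D x u') := by
        refine ⟨⟨z, mem_singleton _, d, hd, ?_⟩, hyW⟩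
        show z - d = y
        rw [ha] at hadw
        rw [← hadw]
        exact add_sub_cancel_right y d
      rw [hw.2] at hymem
      exact notMem_empty y hymem
  -- a point of P₀ cannot be in the interior of the lower closure of Q
  have hnotint : ∀ y ∈ P₀, y ∉ interior (closure (toE ⁻¹' Q - C)) := by
    intro y hy hyint
    have hcont : Continuous fun t : ℝ => y + t • c := by fun_prop
    have hpre : IsOpen ((fun t : ℝ => y + t • c) ⁻¹' interior (closure (toE ⁻¹' Q - C))) :=
      hcont.isOpen_preimage _ isOpen_interior
    have h0pre : (0:ℝ) ∈ (fun t : ℝ => y + t • c) ⁻¹' interior (closure (toE ⁻¹' Q - C)) := by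
      simpa using hyint
    obtain ⟨δ, hδ, hball⟩ := Metric.isOpen_iff.1 hpre 0 h0pre
    have hε : (0:ℝ) < δ/2 := by linarith
    have hyε : y + (δ/2) • c ∈ closure (toE ⁻¹' Q - C) := by
      have : (δ/2 : ℝ) ∈ Metric.ball (0:ℝ) δ := by
        simp [Real.ball_eq_Ioo]; constructor <;> linarith
      exact interior_subset (hball this)
    have hO : IsOpen ({y} + interior C) := IsOpen.add_left isOpen_interior
    have hyεO : y + (δ/2) • c ∈ {y} + interior C :=
      ⟨y, mem_singleton _, (δ/2) • c, smul_mem_interior hCone hc hε, rfl⟩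
    obtain ⟨p, hpO, hpQC⟩ := mem_closure_iff.1 hyε _ hO hyεO
    rcases hpQC with ⟨d, hd, k, hk, rfl⟩
    rcases hpO with ⟨a, ha, d₂, hd₂, hpe⟩
    rw [mem_singleton_iff] at ha
    rw [ha] at hpe
    apply hsep y hy d hd
    refine ⟨y, mem_singleton _, d₂ + k, interior_add_cone hC hCone _ hd₂ _ hk, ?_⟩
    show y + (d₂ + k) = d
    have hpe' : y + d₂ = d - k := hpe
    rw [← add_assoc]
    exact eq_sub_iff_add_eq.1 hpe'
  unfold supSE
  split_ifs with h1 h2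
  · -- loCloE C Q = univ : show P₀ is empty
    rw [upCloE_singleton_posInf]
    intro y hy
    unfold loCloE at h1
    split_ifs at h1 with hp hq
    · -- posInf ∈ Q
      obtain ⟨u', hp'⟩ := mem_iUnion.1 hp
      unfold dualObj infSE at hp'
      split_ifs at hp' with g1 g2
      · exact absurd (mem_singleton_iff.1 hp') (by simp only [posInf]; exact WithBot.coe_ne_bot)
      · have := primal_subset_upCloE_lagr hC hCone hc F G D u' hy
        rw [g2] at this
        exact notMem_empty y this
      · obtain ⟨w, -, hw⟩ := hp'
        exact toE_ne_posInf w hw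
    · exact absurd h1 empty_ne_univ
    · have := hnotint y hy
      rw [h1, interior_univ] at this
      exact this (mem_univ y)
  · rw [upCloE_singleton_bot]
    exact subset_univ _
  · -- generic case
    have hp : posInf Y ∉ Q := fun h => h1 (by unfold loCloE; rw [if_pos h])
    have hq : Q ≠ {(⊥ : EY Y)} := fun h => h2 (by unfold loCloE; rw [if_neg hp, if_pos h])
    have hform : loCloE C Q = closure (toE ⁻¹' Q - C) := by
      unfold loCloE; rw [if_neg hp, if_neg hq]
    intro y hy
    rw [upCloE_image_toE, hform]
    rw [hform] at h1 h2
    exact dominationMax hC hCone hc isClosed_closure (closure_sub_cone hC hCone _)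
      h1 (nonempty_iff_ne_empty.2 h2) y (hnotint y hy)
end

section
/- Characterization of positive subgradients via the dual objective: for u* ∈ U* with φ(u*) ⊆ Y, one has u* ∈ ∂⁺W(0,y) if and only if y ∈ φ(u*), where W is the perturbation map W(u) = Inf ⋃_{x∈X} φ(x,u) with φ(x,u) = F(x) if G(x) ∩ (−D−u) ≠ ∅ and ∅ otherwise, ∂⁺W(0,y) consists of all u* ∈ −D° with y ∈ Inf ⋃_{u∈U}(W(u) − ⟨u*,u⟩c), and φ(u*) = Inf ⋃_{x∈X} (F(x) + Inf ⋃_{u∈G(x)+D} ⟨u*,u⟩{c}). -/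
open Set Pointwise
open scoped Classical

variable {Y : Type*} [AddCommGroup Y] [Module ℝ Y] [TopologicalSpace Y]
  [IsTopologicalAddGroup Y] [ContinuousSMul ℝ Y]

variable {X U : Type*} [AddCommGroup X] [Module ℝ X]
  [AddCommGroup U] [Module ℝ U] [TopologicalSpace U] [IsTopologicalAddGroup U]
  [ContinuousSMul ℝ U] [T2Space U] [LocallyConvexSpace ℝ U]

set_option linter.unusedSectionVars false
set_option linter.unusedVariables false
set_option maxHeartbeats 1000000

section EYArith
variable {Y : Type*} [AddCommGroup Y]

theorem my_toE_injective : Function.Injective (toE : Y → EY Y) := by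
  intro a b h
  simpa [toE] using h

theorem my_toE_ne_bot (y : Y) : toE y ≠ (⊥ : EY Y) := WithBot.coe_ne_bot

theorem my_toE_ne_posInf (y : Y) : toE y ≠ posInf Y := by
  simp [toE, posInf]

theorem my_posInf_ne_bot : posInf Y ≠ (⊥ : EY Y) := WithBot.coe_ne_bot

theorem my_ey_cases (e : EY Y) : e = ⊥ ∨ e = posInf Y ∨ ∃ y, e = toE y := by
  rcases e with _ | e
  · exact Or.inl rfl
  rcases e with _ | y
  · exact Or.inr (Or.inl rfl)
  · exact Or.inr (Or.inr ⟨y, rfl⟩)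

theorem my_toE_add (a b : Y) : toE a + toE b = toE (a + b) := by
  simp [toE, ← WithBot.coe_add, ← WithTop.coe_add]

theorem my_posInf_add_toE (b : Y) : posInf Y + toE b = posInf Y := by
  show ((⊤ : WithTop Y) : EY Y) + ((b : WithTop Y) : EY Y) = ((⊤ : WithTop Y) : EY Y)
  rw [← WithBot.coe_add, WithTop.top_add]

theorem my_bot_add (x : EY Y) : (⊥ : EY Y) + x = ⊥ := WithBot.bot_add x
theorem my_add_bot (x : EY Y) : x + (⊥ : EY Y) = ⊥ := WithBot.add_bot x

theorem my_add_toE_eq_bot {x : EY Y} {b : Y} : x + toE b = ⊥ ↔ x = ⊥ := by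
  constructor
  · intro h
    rcases (WithBot.add_eq_bot).1 h with h | h
    · exact h
    · exact absurd h (my_toE_ne_bot b)
  · rintro rfl; exact my_bot_add _

theorem my_add_toE_eq_toE {x : EY Y} {b z : Y} :
    x + toE b = toE z ↔ ∃ a, x = toE a ∧ a + b = z := by
  constructor
  · intro h
    rcases my_ey_cases x with rfl | rfl | ⟨a, rfl⟩
    · simp [my_bot_add] at h
      exact absurd h.symm (my_toE_ne_bot z)
    · rw [my_posInf_add_toE] at h
      exact absurd h.symm (my_toE_ne_posInf z)
    · rw [my_toE_add] at h
      exact ⟨a, rfl, my_toE_injective h⟩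
  · rintro ⟨a, rfl, rfl⟩; exact my_toE_add a b

theorem my_toE_add_posInf (a : Y) : toE a + posInf Y = posInf Y := by
  show ((a : WithTop Y) : EY Y) + ((⊤ : WithTop Y) : EY Y) = ((⊤ : WithTop Y) : EY Y)
  rw [← WithBot.coe_add, WithTop.add_top]

theorem my_posInf_add_posInf : posInf Y + posInf Y = posInf Y := by
  show ((⊤ : WithTop Y) : EY Y) + ((⊤ : WithTop Y) : EY Y) = ((⊤ : WithTop Y) : EY Y)
  rw [← WithBot.coe_add, WithTop.add_top]

end EYArith

section Topo
variable {Y : Type*} [AddCommGroup Y] [Module ℝ Y] [TopologicalSpace Y]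
  [IsTopologicalAddGroup Y] [ContinuousSMul ℝ Y]

theorem my_closure_add_subset (s t : Set Y) : closure s + t ⊆ closure (s + t) := by
  rintro - ⟨a, ha, b, hb, rfl⟩
  have h2 : closure ((Homeomorph.addRight b) '' s) = (Homeomorph.addRight b) '' closure s :=
    ((Homeomorph.addRight b).image_closure s).symm
  have : a + b ∈ closure ((Homeomorph.addRight b) '' s) := by
    rw [h2]; exact ⟨a, ha, rfl⟩
  refine closure_mono ?_ this
  rintro - ⟨x, hx, rfl⟩; exact ⟨x, hx, b, hb, rfl⟩

theorem my_closure_add_closure (s t : Set Y) : closure (s + closure t) = closure (s + t) := by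
  apply Subset.antisymm
  · have : s + closure t ⊆ closure (s + t) := by
      rw [add_comm s (closure t), add_comm s t]
      exact (my_closure_add_subset t s).trans (by rfl)
    exact closure_minimal this isClosed_closure
  · exact closure_mono (add_subset_add_left subset_closure)

theorem my_closure_add_singleton (s : Set Y) (b : Y) :
    closure (s + {b}) = closure s + {b} := by
  rw [Set.add_singleton, Set.add_singleton]
  exact ((Homeomorph.addRight b).image_closure s).symm

theorem my_closure_iUnion_closure {ι : Sort*} (s : ι → Set Y) :
    closure (⋃ i, closure (s i)) = closure (⋃ i, s i) := by
  apply Subset.antisymm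
  · apply closure_minimal _ isClosed_closure
    exact iUnion_subset fun i => closure_mono (subset_iUnion s i)
  · exact closure_mono (iUnion_mono fun i => subset_closure)

end Topo

section Cone
variable {Y : Type*} [AddCommGroup Y] [Module ℝ Y] [TopologicalSpace Y]
  [IsTopologicalAddGroup Y] [ContinuousSMul ℝ Y]
variable {C : Set Y} {c : Y}

theorem my_smul_mem_C (hCone : ∀ r : ℝ, 0 < r → r • C ⊆ C) {r : ℝ} (hr : 0 < r)
    {x : Y} (hx : x ∈ C) : r • x ∈ C :=
  hCone r hr ⟨x, hx, rfl⟩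

theorem my_C_add_C (hC : Convex ℝ C) (hCone : ∀ r : ℝ, 0 < r → r • C ⊆ C) :
    C + C ⊆ C := by
  rintro - ⟨x, hx, y, hy, rfl⟩
  have hmid : (1/2 : ℝ) • x + (1/2 : ℝ) • y ∈ C :=
    hC hx hy (by norm_num) (by norm_num) (by norm_num)
  have h2 := my_smul_mem_C hCone (by norm_num : (0:ℝ) < 2) hmid
  have : (2:ℝ) • ((1/2 : ℝ) • x + (1/2 : ℝ) • y) = x + y := by
    rw [smul_add, smul_smul, smul_smul]
    norm_num
  rw [this] at h2
  exact h2

theorem my_absorb (hC : Convex ℝ C) (hCone : ∀ r : ℝ, 0 < r → r • C ⊆ C)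
    (hc : c ∈ interior C) (z : Y) :
    ∃ t₀ : ℝ, 0 < t₀ ∧ ∀ t : ℝ, t₀ ≤ t → z + t • c ∈ C := by
  have hz : Filter.Tendsto (fun n : ℕ => c + ((n : ℝ))⁻¹ • z) Filter.atTop (nhds c) := by
    have h1 : Filter.Tendsto (fun n : ℕ => ((n : ℝ))⁻¹ • z) Filter.atTop (nhds ((0:ℝ) • z)) :=
      tendsto_inv_atTop_nhds_zero_nat.smul_const z
    rw [zero_smul] at h1
    simpa using (tendsto_const_nhds.add h1)
  have hev := hz.eventually (isOpen_interior.eventually_mem hc)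
  obtain ⟨m, hm⟩ := Filter.eventually_atTop.1 ((Filter.eventually_ge_atTop 1).and hev)
  obtain ⟨hn1, hn⟩ := hm m le_rfl
  set n := m with hndef
  refine ⟨(n : ℝ), by exact_mod_cast Nat.lt_of_lt_of_le Nat.zero_lt_one hn1, ?_⟩
  intro t ht
  have hn0 : (0:ℝ) < (n:ℝ) := by exact_mod_cast Nat.lt_of_lt_of_le Nat.zero_lt_one hn1
  have ht0 : (0:ℝ) < t := lt_of_lt_of_le hn0 ht
  have hcomb : c + t⁻¹ • z ∈ C := by
    have ha : (0:ℝ) ≤ 1 - (n:ℝ)/t := by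
      rw [sub_nonneg, div_le_one ht0]; exact ht
    have hb : (0:ℝ) < (n:ℝ)/t := div_pos hn0 ht0
    have hcC : c ∈ C := interior_subset hc
    have hnC : c + ((n:ℝ))⁻¹ • z ∈ C := interior_subset (hn)
    have := hC hcC hnC ha (le_of_lt hb) (by ring)
    convert this using 1
    rw [smul_add, smul_smul]
    have : (n:ℝ)/t * ((n:ℝ))⁻¹ = t⁻¹ := by
      field_simp
    rw [this, sub_smul, one_smul]
    abel
  have h3 := my_smul_mem_C hCone ht0 hcomb
  have : t • (c + t⁻¹ • z) = z + t • c := by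
    rw [smul_add, smul_smul, mul_inv_cancel₀ (ne_of_gt ht0), one_smul]
    abel
  rw [this] at h3
  exact h3

end Cone


section MinLemma
variable {Y : Type*} [AddCommGroup Y] [Module ℝ Y] [TopologicalSpace Y]
  [IsTopologicalAddGroup Y] [ContinuousSMul ℝ Y]
variable {C : Set Y} {c : Y}

/-- key: for a closed upper set `A ≠ univ`, `closure (wMin A + C) = A`. -/
theorem my_wMin_dense (hC : Convex ℝ C) (hCone : ∀ r : ℝ, 0 < r → r • C ⊆ C)
    (hc : c ∈ interior C) {A : Set Y} (hA : IsClosed A) (hup : A + C ⊆ A)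
    (hne : A ≠ univ) : closure (wMinSet C A + C) = A := by
  apply Subset.antisymm
  · apply closure_minimal _ hA
    refine (add_subset_add_right (fun y hy => hy.1)).trans hup
  · intro a ha
    set S : Set ℝ := {t : ℝ | a + t • c ∈ A} with hSdef
    have h0 : (0:ℝ) ∈ S := by simp [hSdef, ha]
    have hScl : IsClosed S := by
      have hcont : Continuous fun t : ℝ => a + t • c :=
        continuous_const.add (continuous_id.smul continuous_const)
      exact hA.preimage hcont
    have hbdd : BddBelow S := by
      by_contra hb
      apply hne
      ext y
      simp only [mem_univ, iff_true]
      obtain ⟨t₀, ht₀pos, ht₀⟩ := my_absorb hC hCone hc (y - a)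
      obtain ⟨t, htS, htlt⟩ := (not_bddBelow_iff).1 hb (-t₀)
      have hz : y - a + (-t) • c ∈ C := ht₀ (-t) (by linarith)
      have : (a + t • c) + (y - a + (-t) • c) ∈ A := hup ⟨_, htS, _, hz, rfl⟩
      have he : (a + t • c) + (y - a + (-t) • c) = y := by
        rw [neg_smul]; abel
      rwa [he] at this
    set τ := sInf S with hτdef
    have hτS : τ ∈ S := hScl.csInf_mem ⟨0, h0⟩ hbdd
    have hτ0 : τ ≤ 0 := csInf_le hbdd h0
    have hminA : a + τ • c ∈ A := hτS
    have hmin : a + τ • c ∈ wMinSet C A := by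
      refine ⟨hminA, ?_⟩
      by_contra hnonempty
      obtain ⟨w, hw1, hw2⟩ := nonempty_iff_ne_empty.2 hnonempty
      obtain ⟨p, hp, k, hk, hpk⟩ := Set.mem_sub.1 hw1
      rw [Set.mem_singleton_iff] at hp
      subst hp
      have hklim : Filter.Tendsto (fun ε : ℝ => k - ε • c) (nhds 0) (nhds k) := by
        have : Filter.Tendsto (fun ε : ℝ => ε • c) (nhds 0) (nhds ((0:ℝ) • c)) :=
          (continuous_id.smul continuous_const).tendsto 0
        rw [zero_smul] at this
        simpa using (tendsto_const_nhds.sub this)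
      have hev : ∀ᶠ ε : ℝ in nhds 0, k - ε • c ∈ interior C :=
        hklim.eventually (isOpen_interior.eventually_mem hk)
      have hev2 : ∀ᶠ ε : ℝ in nhdsWithin (0:ℝ) (Set.Ioi 0),
          (k - ε • c ∈ interior C) ∧ ε ∈ Set.Ioi (0:ℝ) :=
        (hev.filter_mono nhdsWithin_le_nhds).and
          (eventually_mem_nhdsWithin)
      obtain ⟨ε, hεmem, hεpos⟩ := hev2.exists
      have hwA : a + τ • c - k ∈ A := by rw [hpk]; exact hw2
      have hnew : a + (τ - ε) • c ∈ A := by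
        have : (a + τ • c - k) + (k - ε • c) ∈ A :=
          hup ⟨_, hwA, _, interior_subset hεmem, rfl⟩
        have he : (a + τ • c - k) + (k - ε • c) = a + (τ - ε) • c := by
          rw [sub_smul]; abel
        rwa [he] at this
      have : τ ≤ τ - ε := csInf_le hbdd hnew
      have : ε ∈ Set.Ioi (0:ℝ) := hεpos
      simp only [Set.mem_Ioi] at this
      linarith [csInf_le hbdd hnew]
    -- now a = (a + τ•c) + (-τ)•c
    rcases lt_or_eq_of_le hτ0 with hlt | heq
    · apply subset_closure
      refine ⟨_, hmin, (-τ) • c, my_smul_mem_C hCone (by linarith) (interior_subset hc), ?_⟩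
      show (a + τ • c) + (-τ) • c = a
      rw [neg_smul, add_assoc, add_neg_cancel, add_zero]
    · have haa : a + τ • c = a := by rw [heq]; simp
      rw [haa] at hmin
      have : Filter.Tendsto (fun n : ℕ => a + ((n:ℝ)+1)⁻¹ • c) Filter.atTop (nhds a) := by
        have h1 : Filter.Tendsto (fun n : ℕ => ((n:ℝ)+1)⁻¹ • c) Filter.atTop
            (nhds ((0:ℝ) • c)) := (tendsto_one_div_add_atTop_nhds_zero_nat.congr
            (fun n => by rw [one_div])).smul_const c
        rw [zero_smul] at h1
        simpa using tendsto_const_nhds.add h1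
      refine mem_closure_of_tendsto this (Filter.Eventually.of_forall fun n => ?_)
      exact ⟨a, hmin, _, my_smul_mem_C hCone (by positivity) (interior_subset hc), rfl⟩

theorem my_wMin_nonempty (hC : Convex ℝ C) (hCone : ∀ r : ℝ, 0 < r → r • C ⊆ C)
    (hc : c ∈ interior C) {A : Set Y} (hA : IsClosed A) (hup : A + C ⊆ A)
    (hne : A ≠ univ) (hA0 : A.Nonempty) : (wMinSet C A).Nonempty := by
  by_contra h
  rw [not_nonempty_iff_eq_empty] at h
  have := my_wMin_dense hC hCone hc hA hup hne
  rw [h, Set.empty_add, closure_empty] at this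
  exact hA0.ne_empty this.symm

theorem my_unbounded_univ (hC : Convex ℝ C) (hCone : ∀ r : ℝ, 0 < r → r • C ⊆ C)
    (hc : c ∈ interior C) {T : Set ℝ} (hT : ¬ BddBelow T) :
    (fun t : ℝ => t • c) '' T + C = univ := by
  ext y
  simp only [mem_univ, iff_true]
  obtain ⟨t₀, ht₀pos, ht₀⟩ := my_absorb hC hCone hc y
  obtain ⟨t, htT, htlt⟩ := (not_bddBelow_iff).1 hT (-t₀)
  refine ⟨t • c, ⟨t, htT, rfl⟩, y + (-t) • c, ht₀ (-t) (by linarith), ?_⟩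
  show t • c + (y + (-t) • c) = y
  rw [neg_smul, add_comm y, ← add_assoc, add_neg_cancel, zero_add]

end MinLemma



section UpClo
variable {Y : Type*} [AddCommGroup Y] [Module ℝ Y] [TopologicalSpace Y]
  [IsTopologicalAddGroup Y] [ContinuousSMul ℝ Y]
variable {C : Set Y} {c : Y}

theorem my_preimage_add_toEimage (F : Set (EY Y)) (S : Set Y) :
    toE ⁻¹' (F + toE '' S) = toE ⁻¹' F + S := by
  ext z
  simp only [mem_preimage]
  constructor
  · rintro ⟨f, hf, -, ⟨s, hs, rfl⟩, hsum⟩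
    obtain ⟨a, rfl, haz⟩ := my_add_toE_eq_toE.1 hsum
    exact ⟨a, hf, s, hs, haz⟩
  · rintro ⟨a, ha, s, hs, rfl⟩
    exact ⟨toE a, ha, toE s, ⟨s, hs, rfl⟩, my_toE_add a s⟩

theorem my_preimage_add_singleton (F : Set (EY Y)) (b : Y) :
    toE ⁻¹' (F + ({toE b} : Set (EY Y))) = toE ⁻¹' F + {b} := by
  have : ({toE b} : Set (EY Y)) = toE '' {b} := by simp
  rw [this, my_preimage_add_toEimage]

theorem my_preimage_add_posInf (F : Set (EY Y)) :
    toE ⁻¹' (F + ({posInf Y} : Set (EY Y))) = ∅ := by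
  ext z
  simp only [mem_preimage, mem_empty_iff_false, iff_false]
  rintro ⟨f, hf, p, hp, hsum⟩
  rw [Set.mem_singleton_iff] at hp
  subst hp
  have hsum' : f + posInf Y = toE z := hsum
  rcases my_ey_cases f with rfl | rfl | ⟨a, rfl⟩
  · rw [my_bot_add] at hsum'; exact my_toE_ne_bot z hsum'.symm
  · rw [my_posInf_add_posInf] at hsum'; exact my_toE_ne_posInf z hsum'.symm
  · rw [my_toE_add_posInf] at hsum'; exact my_toE_ne_posInf z hsum'.symm

theorem my_preimage_empty_toE : toE ⁻¹' (∅ : Set (EY Y)) = ∅ := by simp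

theorem my_bot_mem_infSE {A : Set (EY Y)} :
    (⊥ : EY Y) ∈ infSE C A ↔ upCloE C A = univ := by
  unfold infSE
  split_ifs with h1 h2
  · simp [h1]
  · simp only [mem_singleton_iff]
    exact ⟨fun h => absurd h.symm my_posInf_ne_bot, fun h => absurd h h1⟩
  · simp only [mem_image]
    constructor
    · rintro ⟨y, -, hy⟩; exact absurd hy (my_toE_ne_bot y)
    · intro h; exact absurd h h1

theorem my_infSE_eq_bot_of {A : Set (EY Y)} (h : upCloE C A = univ) :
    infSE C A = {⊥} := by
  unfold infSE; rw [if_pos h]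

theorem my_infSE_eq_posInf_of {A : Set (EY Y)} (h1 : upCloE C A ≠ univ)
    (h2 : upCloE C A = ∅) : infSE C A = {posInf Y} := by
  unfold infSE; rw [if_neg h1, if_pos h2]

theorem my_infSE_congr {A B : Set (EY Y)} (h : upCloE C A = upCloE C B) :
    infSE C A = infSE C B := by
  unfold infSE
  rw [h]

theorem my_upClo_eq_of {A B : Set (EY Y)} (h1 : (⊥ : EY Y) ∉ A) (h2 : (⊥ : EY Y) ∉ B)
    (h3 : closure (toE ⁻¹' A + C) = closure (toE ⁻¹' B + C)) :
    upCloE C A = upCloE C B := by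
  unfold upCloE
  rw [if_neg h1, if_neg h2]
  by_cases hA : A = {posInf Y}
  · rw [if_pos hA]
    have hAp : toE ⁻¹' A = ∅ := by
      rw [hA]; ext z; simp [my_toE_ne_posInf z]
    rw [hAp, Set.empty_add, closure_empty] at h3
    by_cases hB : B = {posInf Y}
    · rw [if_pos hB]
    · rw [if_neg hB, ← h3]
  · rw [if_neg hA]
    by_cases hB : B = {posInf Y}
    · rw [if_pos hB]
      have hBp : toE ⁻¹' B = ∅ := by
        rw [hB]; ext z; simp [my_toE_ne_posInf z]
      rw [hBp, Set.empty_add, closure_empty] at h3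
      exact h3
    · rw [if_neg hB, h3]

theorem my_upClo_upper (hC : Convex ℝ C) (hCone : ∀ r : ℝ, 0 < r → r • C ⊆ C)
    (s : Set Y) : closure (s + C) + C ⊆ closure (s + C) := by
  refine (my_closure_add_subset (s + C) C).trans (closure_mono ?_)
  rw [add_assoc]
  exact add_subset_add_left (my_C_add_C hC hCone)

theorem my_preimage_ne_empty_of_upClo {A : Set (EY Y)} (hCne : C.Nonempty)
    (hbot : (⊥ : EY Y) ∉ A) (hAp : A ≠ {posInf Y})
    (hne : upCloE C A = ∅) : toE ⁻¹' A = ∅ := by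
  unfold upCloE at hne
  rw [if_neg hbot, if_neg hAp] at hne
  by_contra h
  obtain ⟨z, hz⟩ := nonempty_iff_ne_empty.2 h
  obtain ⟨k, hk⟩ := hCne
  have : z + k ∈ closure (toE ⁻¹' A + C) := subset_closure ⟨z, hz, k, hk, rfl⟩
  rw [hne] at this
  exact this

end UpClo

section Assembly
variable {Y : Type*} [AddCommGroup Y] [Module ℝ Y] [TopologicalSpace Y]
  [IsTopologicalAddGroup Y] [ContinuousSMul ℝ Y]
variable {C : Set Y} {c : Y}

theorem my_infSE_proper (hC : Convex ℝ C) (hCone : ∀ r : ℝ, 0 < r → r • C ⊆ C)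
    (hc : c ∈ interior C) {A : Set (EY Y)} (h1 : upCloE C A ≠ univ)
    (h2 : upCloE C A ≠ ∅) :
    (⊥ : EY Y) ∉ A ∧ upCloE C A = closure (toE ⁻¹' A + C) ∧
      (wMinSet C (upCloE C A)).Nonempty ∧
      infSE C A = toE '' wMinSet C (upCloE C A) ∧
      closure (wMinSet C (upCloE C A) + C) = upCloE C A := by
  have hbot : (⊥ : EY Y) ∉ A := by
    intro hb
    apply h1
    unfold upCloE
    rw [if_pos hb]
  have hAp : A ≠ {posInf Y} := by
    intro hp
    apply h2
    unfold upCloE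
    rw [if_neg hbot, if_pos hp]
  have hK : upCloE C A = closure (toE ⁻¹' A + C) := by
    unfold upCloE
    rw [if_neg hbot, if_neg hAp]
  have hclosed : IsClosed (upCloE C A) := by rw [hK]; exact isClosed_closure
  have hupper : upCloE C A + C ⊆ upCloE C A := by
    rw [hK]; exact my_upClo_upper hC hCone _
  have hdense := my_wMin_dense hC hCone hc hclosed hupper h1
  have hne : (wMinSet C (upCloE C A)).Nonempty :=
    my_wMin_nonempty hC hCone hc hclosed hupper h1 (nonempty_iff_ne_empty.2 h2)
  refine ⟨hbot, hK, hne, ?_, hdense⟩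
  unfold infSE
  rw [if_neg h1, if_neg h2]

theorem my_closure_union_add {ι : Sort*} (f g : ι → Set Y)
    (h : ∀ i, closure (f i + C) = closure (g i + C)) :
    closure ((⋃ i, f i) + C) = closure ((⋃ i, g i) + C) := by
  rw [iUnion_add, iUnion_add, ← my_closure_iUnion_closure (fun i => f i + C),
    ← my_closure_iUnion_closure (fun i => g i + C)]
  exact congrArg closure (iUnion_congr h)

theorem my_QR {ι : Sort*} (hC : Convex ℝ C) (hCone : ∀ r : ℝ, 0 < r → r • C ⊆ C)
    (hc : c ∈ interior C) (F B : ι → Set (EY Y)) (hB : ∀ i, B i ⊆ range (toE : Y → EY Y))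
    (hbot : (⊥ : EY Y) ∉ ⋃ i, F i + infSE C (B i)) :
    upCloE C (⋃ i, F i + infSE C (B i)) = upCloE C (⋃ i, F i + B i) := by
  have hYne : Nonempty Y := ⟨0⟩
  have hCne : C.Nonempty := ⟨c, interior_subset hc⟩
  have hboti : ∀ i, (⊥ : EY Y) ∉ F i + infSE C (B i) := by
    intro i hb
    exact hbot (mem_iUnion.2 ⟨i, hb⟩)
  have hBp : ∀ i, B i ≠ {posInf Y} := by
    intro i hp
    have : posInf Y ∈ B i := by rw [hp]; rfl
    obtain ⟨z, hz⟩ := hB i this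
    exact my_toE_ne_posInf z hz
  have hBb : ∀ i, (⊥ : EY Y) ∉ B i := by
    intro i hb
    obtain ⟨z, hz⟩ := hB i hb
    exact my_toE_ne_bot z hz
  -- per index dichotomy
  have key : ∀ i, closure (toE ⁻¹' (F i + infSE C (B i)) + C)
      = closure (toE ⁻¹' (F i + B i) + C) ∧ (⊥ : EY Y) ∉ F i + B i := by
    intro i
    by_cases h1 : upCloE C (B i) = univ
    · -- infSE (B i) = {⊥}, so F i must be empty
      have hinf : infSE C (B i) = {⊥} := by unfold infSE; rw [if_pos h1]
      have hFe : F i = ∅ := by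
        rw [eq_empty_iff_forall_notMem]
        intro f hf
        apply hboti i
        rw [hinf]
        exact ⟨f, hf, ⊥, rfl, my_add_bot f⟩
      rw [hFe, Set.empty_add, Set.empty_add]
      exact ⟨rfl, by simp⟩
    by_cases h2 : upCloE C (B i) = ∅
    · -- B i = ∅, infSE (B i) = {posInf}
      have hBe : B i = ∅ := by
        have hpre := my_preimage_ne_empty_of_upClo hCne (hBb i) (hBp i) h2
        rw [eq_empty_iff_forall_notMem]
        intro e he
        obtain ⟨z, hz⟩ := hB i he
        rw [← hz] at he
        have : z ∈ toE ⁻¹' (B i) := he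
        rw [hpre] at this
        exact this
      have hinf : infSE C (B i) = {posInf Y} := by unfold infSE; rw [if_neg h1, if_pos h2]
      rw [hinf, hBe, Set.add_empty, my_preimage_add_posInf]
      constructor
      · rfl
      · simp
    · -- proper case
      obtain ⟨hKb, hK, hMne, hinf, hdense⟩ := my_infSE_proper hC hCone hc h1 h2
      set K := upCloE C (B i) with hKdef
      set M := wMinSet C K with hMdef
      have hFb : (⊥ : EY Y) ∉ F i := by
        intro hf
        apply hboti i
        obtain ⟨m, hm⟩ := hMne
        rw [hinf]
        exact ⟨⊥, hf, toE m, ⟨m, hm, rfl⟩, my_bot_add _⟩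
      constructor
      · rw [hinf, my_preimage_add_toEimage]
        have hBimg : toE '' (toE ⁻¹' (B i)) = B i := Set.image_preimage_eq_of_subset (hB i)
        conv_rhs => rw [← hBimg]
        rw [my_preimage_add_toEimage]
        rw [add_assoc, add_assoc]
        rw [← my_closure_add_closure (toE ⁻¹' (F i)) (M + C),
          ← my_closure_add_closure (toE ⁻¹' (F i)) (toE ⁻¹' (B i) + C)]
        rw [hdense, ← hK]
      · intro hb
        obtain ⟨f, hf, e, he, hsum⟩ := hb
        obtain ⟨z, hz⟩ := hB i he
        rw [← hz] at hsum
        have hsum' : f + toE z = ⊥ := hsum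
        rw [my_add_toE_eq_bot] at hsum'
        exact hFb (hsum' ▸ hf)
  have h3 : closure (toE ⁻¹' (⋃ i, F i + infSE C (B i)) + C)
      = closure (toE ⁻¹' (⋃ i, F i + B i) + C) := by
    rw [preimage_iUnion, preimage_iUnion]
    exact my_closure_union_add _ _ (fun i => (key i).1)
  refine my_upClo_eq_of hbot ?_ h3
  intro hb
  obtain ⟨i, hbi⟩ := mem_iUnion.1 hb
  exact (key i).2 hbi

end Assembly

section Assembly2
variable {Y : Type*} [AddCommGroup Y] [Module ℝ Y] [TopologicalSpace Y]
  [IsTopologicalAddGroup Y] [ContinuousSMul ℝ Y]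
variable {C : Set Y} {c : Y}

theorem my_univ_add_singleton (b : Y) : (univ : Set Y) + {b} = univ := by
  ext y
  simp only [mem_univ, iff_true]
  exact ⟨y - b, trivial, b, rfl, sub_add_cancel y b⟩

theorem my_PR {ι : Sort*} (hC : Convex ℝ C) (hCone : ∀ r : ℝ, 0 < r → r • C ⊆ C)
    (hc : c ∈ interior C) (A : ι → Set (EY Y)) (b : ι → Y)
    (h : upCloE C (⋃ i, A i + ({toE (b i)} : Set (EY Y))) ≠ univ) :
    upCloE C (⋃ i, infSE C (A i) + ({toE (b i)} : Set (EY Y)))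
      = upCloE C (⋃ i, A i + ({toE (b i)} : Set (EY Y))) := by
  have hYne : Nonempty Y := ⟨0⟩
  have hCne : C.Nonempty := ⟨c, interior_subset hc⟩
  have hRnb : (⊥ : EY Y) ∉ ⋃ i, A i + ({toE (b i)} : Set (EY Y)) := by
    intro hb
    apply h
    unfold upCloE
    rw [if_pos hb]
  have hAnb : ∀ i, (⊥ : EY Y) ∉ A i := by
    intro i hb
    exact hRnb (mem_iUnion.2 ⟨i, ⟨⊥, hb, toE (b i), rfl, my_bot_add _⟩⟩)
  have hKA : ∀ i, upCloE C (A i) ≠ univ := by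
    intro i hu
    apply h
    have hApi : A i ≠ {posInf Y} := by
      intro hp
      unfold upCloE at hu
      rw [if_neg (hAnb i), if_pos hp] at hu
      exact Set.empty_ne_univ hu
    have hKi : closure (toE ⁻¹' (A i) + C) = univ := by
      unfold upCloE at hu
      rwa [if_neg (hAnb i), if_neg hApi] at hu
    have hpre_ne : (toE ⁻¹' (A i)).Nonempty := by
      by_contra hemp
      rw [not_nonempty_iff_eq_empty] at hemp
      rw [hemp, Set.empty_add, closure_empty] at hKi
      exact Set.empty_ne_univ hKi
    -- closure of union is univ
    have hsub : closure (toE ⁻¹' (A i) + C) + {b i}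
        ⊆ closure (toE ⁻¹' (⋃ j, A j + ({toE (b j)} : Set (EY Y))) + C) := by
      rw [← my_closure_add_singleton]
      apply closure_mono
      intro y hy
      obtain ⟨p, ⟨q, hq, k, hk, rfl⟩, w, hw, rfl⟩ := hy
      rw [Set.mem_singleton_iff] at hw
      subst hw
      refine ⟨q + b i, ?_, k, hk, show q + b i + k = q + k + b i by abel⟩
      exact mem_preimage.2 (mem_iUnion.2 ⟨i, ⟨toE q, hq, toE (b i), rfl, my_toE_add q (b i)⟩⟩)
    rw [hKi, my_univ_add_singleton] at hsub
    have huniv : closure (toE ⁻¹' (⋃ j, A j + ({toE (b j)} : Set (EY Y))) + C) = univ :=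
      univ_subset_iff.1 hsub
    have hUp : (⋃ j, A j + ({toE (b j)} : Set (EY Y))) ≠ {posInf Y} := by
      intro hp
      have : toE ⁻¹' (⋃ j, A j + ({toE (b j)} : Set (EY Y))) = ∅ := by
        rw [hp]; ext z; simp [my_toE_ne_posInf z]
      rw [this, Set.empty_add, closure_empty] at huniv
      exact Set.empty_ne_univ huniv
    unfold upCloE
    rw [if_neg hRnb, if_neg hUp]
    exact huniv
  have hLnb : (⊥ : EY Y) ∉ ⋃ i, infSE C (A i) + ({toE (b i)} : Set (EY Y)) := by
    intro hb
    obtain ⟨i, e, he, w, hw, hsum⟩ := mem_iUnion.1 hb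
    rw [Set.mem_singleton_iff] at hw
    subst hw
    have hsum' : e + toE (b i) = ⊥ := hsum
    rw [my_add_toE_eq_bot] at hsum'
    subst hsum'
    exact hKA i (my_bot_mem_infSE.1 he)
  have key : ∀ i, closure (toE ⁻¹' (infSE C (A i) + ({toE (b i)} : Set (EY Y))) + C)
      = closure (toE ⁻¹' (A i + ({toE (b i)} : Set (EY Y))) + C) := by
    intro i
    rw [my_preimage_add_singleton, my_preimage_add_singleton]
    by_cases h2 : upCloE C (A i) = ∅
    · have hpre0 : toE ⁻¹' (A i) = ∅ := by
        by_cases hApi : A i = {posInf Y}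
        · rw [hApi]; ext z; simp [my_toE_ne_posInf z]
        · exact my_preimage_ne_empty_of_upClo hCne (hAnb i) hApi h2
      have hinf : infSE C (A i) = {posInf Y} := by
        unfold infSE
        rw [if_neg (hKA i), if_pos h2]
      have hpre1 : toE ⁻¹' (infSE C (A i)) = ∅ := by
        rw [hinf]; ext z; simp [my_toE_ne_posInf z]
      rw [hpre0, hpre1]
    · obtain ⟨-, hK, hMne, hinf, hdense⟩ := my_infSE_proper hC hCone hc (hKA i) h2
      rw [hinf, Set.preimage_image_eq _ my_toE_injective]
      have e1 : wMinSet C (upCloE C (A i)) + {b i} + C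
          = (wMinSet C (upCloE C (A i)) + C) + {b i} := by
        rw [add_assoc, add_assoc, add_comm ({b i} : Set Y) C]
      have e2 : toE ⁻¹' (A i) + {b i} + C = (toE ⁻¹' (A i) + C) + {b i} := by
        rw [add_assoc, add_assoc, add_comm ({b i} : Set Y) C]
      rw [e1, e2, my_closure_add_singleton, my_closure_add_singleton, hdense, hK]
  have h3 : closure (toE ⁻¹' (⋃ i, infSE C (A i) + ({toE (b i)} : Set (EY Y))) + C)
      = closure (toE ⁻¹' (⋃ i, A i + ({toE (b i)} : Set (EY Y))) + C) := by
    rw [preimage_iUnion, preimage_iUnion]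
    exact my_closure_union_add _ _ key
  exact my_upClo_eq_of hLnb hRnb h3

end Assembly2

section Main
variable {Y : Type*} [AddCommGroup Y] [Module ℝ Y] [TopologicalSpace Y]
  [IsTopologicalAddGroup Y] [ContinuousSMul ℝ Y]
variable {X U : Type*} [AddCommGroup X] [Module ℝ X]
  [AddCommGroup U] [Module ℝ U] [TopologicalSpace U] [IsTopologicalAddGroup U]
  [ContinuousSMul ℝ U] [T2Space U] [LocallyConvexSpace ℝ U]




theorem my_pos {C : Set Y} {c : Y} (hC : Convex ℝ C)
    (hCone : ∀ r : ℝ, 0 < r → r • C ⊆ C) (hc : c ∈ interior C)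
    (F : X → Set (EY Y)) (G : X → Set U) {D : Set U}
    (hDconv : Convex ℝ D) (hDcone : ∀ r : ℝ, 0 < r → r • D ⊆ D)
    (u' : U →L[ℝ] ℝ)
    (hphi : dualObj C c F G D u' ⊆ range (toE : Y → EY Y)) :
    ∀ d ∈ D, 0 ≤ u' d := by
  intro d hd
  by_contra hneg
  push_neg at hneg
  set Bx : X → Set (EY Y) := fun x => ⋃ u ∈ G x + D, ({toE (u' u • c)} : Set (EY Y))
    with hBxdef
  have hbotQ : (⊥ : EY Y) ∉ ⋃ x : X, lagr C c F G D x u' := by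
    intro hb
    have hQu : upCloE C (⋃ x : X, lagr C c F G D x u') = univ := by
      unfold upCloE; rw [if_pos hb]
    have : dualObj C c F G D u' = {⊥} := by
      unfold dualObj infSE
      rw [if_pos hQu]
    obtain ⟨z, hz⟩ := hphi (by rw [this]; rfl)
    exact my_toE_ne_bot z hz
  by_cases hex : ∃ x : X, (F x).Nonempty ∧ (G x + D).Nonempty
  · obtain ⟨x, ⟨f, hf⟩, ⟨w, hw⟩⟩ := hex
    -- show upCloE C (Bx x) = univ
    have hpre : toE ⁻¹' (Bx x) = (fun t : ℝ => t • c) '' (u' '' (G x + D)) := by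
      ext z
      simp only [hBxdef, mem_preimage, mem_iUnion, mem_singleton_iff, mem_image]
      constructor
      · rintro ⟨v, hv, hz⟩
        exact ⟨u' v, ⟨v, hv, rfl⟩, (my_toE_injective hz).symm⟩
      · rintro ⟨t, ⟨v, hv, rfl⟩, hz⟩
        exact ⟨v, hv, by rw [hz]⟩
    have hnb : ¬ BddBelow (u' '' (G x + D)) := by
      rintro ⟨L, hL⟩
      set t : ℝ := max 1 ((L - u' w) / u' d + 1) with htdef
      have ht1 : (1:ℝ) ≤ t := le_max_left _ _
      have ht0 : (0:ℝ) < t := lt_of_lt_of_le zero_lt_one ht1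
      have htgt : (L - u' w) / u' d < t := lt_of_lt_of_le (lt_add_one _) (le_max_right _ _)
      have hvmem : w + t • d ∈ G x + D := by
        obtain ⟨g, hg, d₀, hd₀, rfl⟩ := hw
        refine ⟨g, hg, d₀ + t • d, ?_, show g + (d₀ + t • d) = g + d₀ + t • d by rw [add_assoc]⟩
        exact my_C_add_C hDconv hDcone ⟨d₀, hd₀, t • d, hDcone t ht0 ⟨d, hd, rfl⟩, rfl⟩
      have hlb := hL ⟨w + t • d, hvmem, rfl⟩
      rw [map_add, map_smul] at hlb
      have : t * u' d < L - u' w := by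
        rw [div_lt_iff_of_neg hneg] at htgt
        linarith [htgt]
      simp only [smul_eq_mul] at hlb
      linarith
    have huniv : upCloE C (Bx x) = univ := by
      have hBb : (⊥ : EY Y) ∉ Bx x := by
        intro hb
        simp only [hBxdef, mem_iUnion, mem_singleton_iff] at hb
        obtain ⟨v, hv, hveq⟩ := hb
        exact my_toE_ne_bot _ hveq.symm
      have hBp : Bx x ≠ {posInf Y} := by
        intro hp
        have : posInf Y ∈ Bx x := by rw [hp]; rfl
        simp only [hBxdef, mem_iUnion, mem_singleton_iff] at this
        obtain ⟨v, hv, hveq⟩ := this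
        exact my_toE_ne_posInf _ hveq.symm
      unfold upCloE
      rw [if_neg hBb, if_neg hBp, hpre, my_unbounded_univ hC hCone hc hnb]
      exact closure_univ
    apply hbotQ
    refine mem_iUnion.2 ⟨x, ?_⟩
    have hinf : infSE C (Bx x) = {⊥} := by unfold infSE; rw [if_pos huniv]
    show (⊥ : EY Y) ∈ F x + infSE C (Bx x)
    rw [hinf]
    exact ⟨f, hf, ⊥, rfl, my_add_bot f⟩
  · push_neg at hex
    have hYne : Nonempty Y := ⟨0⟩
    have hsubQ : ∀ e ∈ ⋃ x : X, lagr C c F G D x u', e = posInf Y := by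
      intro e he
      obtain ⟨x, hx⟩ := mem_iUnion.1 he
      rcases eq_empty_or_nonempty (F x) with hFe | hFne
      · exfalso
        have : lagr C c F G D x u' = ∅ := by
          unfold lagr; rw [hFe, Set.empty_add]
        rw [this] at hx; exact hx
      · have hGe : G x + D = ∅ := hex x hFne
        have hBe : Bx x = ∅ := by
          simp [hBxdef, hGe]
        have hupe : upCloE C (Bx x) = ∅ := by
          unfold upCloE
          rw [hBe]
          rw [if_neg (by simp : (⊥ : EY Y) ∉ (∅ : Set (EY Y))),
            if_neg (Ne.symm (Set.singleton_ne_empty _)), Set.preimage_empty,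
            Set.empty_add, closure_empty]
        have hinf : infSE C (Bx x) = {posInf Y} := by
          unfold infSE
          rw [hupe, if_neg (Set.empty_ne_univ), if_pos rfl]
        have hx' : e ∈ F x + infSE C (Bx x) := hx
        rw [hinf] at hx'
        obtain ⟨f', hf', p, hp, hsum⟩ := hx'
        rw [Set.mem_singleton_iff] at hp
        subst hp
        have hsum' : f' + posInf Y = e := hsum
        rcases my_ey_cases f' with rfl | rfl | ⟨a, rfl⟩
        · exfalso
          apply hbotQ
          rw [my_bot_add] at hsum'
          rw [← hsum'] at he
          exact he
        · rw [my_posInf_add_posInf] at hsum'; exact hsum'.symm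
        · rw [my_toE_add_posInf] at hsum'; exact hsum'.symm
    have hupQ : upCloE C (⋃ x : X, lagr C c F G D x u') = ∅ := by
      have hpre : toE ⁻¹' (⋃ x : X, lagr C c F G D x u') = ∅ := by
        ext z
        simp only [mem_preimage, mem_empty_iff_false, iff_false]
        intro hz
        exact my_toE_ne_posInf z (hsubQ _ hz)
      unfold upCloE
      rw [if_neg hbotQ]
      by_cases hp : (⋃ x : X, lagr C c F G D x u') = {posInf Y}
      · rw [if_pos hp]
      · rw [if_neg hp, hpre, Set.empty_add, closure_empty]
    have : dualObj C c F G D u' = {posInf Y} := by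
      unfold dualObj infSE
      rw [hupQ, if_neg (Set.empty_ne_univ), if_pos rfl]
    obtain ⟨z, hz⟩ := hphi (by rw [this]; rfl)
    exact my_toE_ne_posInf z hz

end Main


/-- Characterization of positive subgradients of the perturbation map `W` at `(0, y)`
via the dual objective function. -/
theorem stmt_16 (C : Set Y) (c : Y) (hC : Convex ℝ C)
    (hCone : ∀ r : ℝ, 0 < r → r • C ⊆ C)
    (hInt : (interior C).Nonempty) (hIntNe : interior C ≠ univ)
    (hc : c ∈ interior C)
    (F : X → Set (EY Y)) (G : X → Set U) (D : Set U)
    (hDcl : IsClosed D) (hDconv : Convex ℝ D)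
    (hDcone : ∀ r : ℝ, 0 < r → r • D ⊆ D)
    (hDint : (interior D).Nonempty) (hDproper : D ≠ univ)
    (u' : U →L[ℝ] ℝ)
    (hphi : dualObj C c F G D u' ⊆ range (toE : Y → EY Y)) :
    ∀ y : Y,
      ((∀ d ∈ D, 0 ≤ u' d) ∧
        toE y ∈ infSE C
          (⋃ u : U, (pertW C F G D u + ({toE (-(u' u • c))} : Set (EY Y))))) ↔
      toE y ∈ dualObj C c F G D u' := by
  intro y
  have hpos : ∀ d ∈ D, 0 ≤ u' d := my_pos hC hCone hc F G hDconv hDcone u' hphi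
  set Bx : X → Set (EY Y) := fun x => ⋃ u ∈ G x + D, ({toE (u' u • c)} : Set (EY Y))
    with hBxdef
  set Au : U → Set (EY Y) :=
    fun u => ⋃ x ∈ {x : X | (G x ∩ (-D - {u})).Nonempty}, F x with hAudef
  set bu : U → Y := fun u => -(u' u • c) with hbudef
  have hQlagr : (⋃ x : X, lagr C c F G D x u') = ⋃ x : X, F x + infSE C (Bx x) := rfl
  have hdual : dualObj C c F G D u' = infSE C (⋃ x : X, F x + infSE C (Bx x)) := rfl
  -- structure of the dual objective from hphi
  have hQu : upCloE C (⋃ x : X, F x + infSE C (Bx x)) ≠ univ := by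
    intro h
    have : dualObj C c F G D u' = {⊥} := by
      rw [hdual, my_infSE_eq_bot_of h]
    obtain ⟨z, hz⟩ := hphi (by rw [this]; rfl)
    exact my_toE_ne_bot z hz
  have hQe : upCloE C (⋃ x : X, F x + infSE C (Bx x)) ≠ ∅ := by
    intro h
    have : dualObj C c F G D u' = {posInf Y} := by
      rw [hdual, my_infSE_eq_posInf_of hQu h]
    obtain ⟨z, hz⟩ := hphi (by rw [this]; rfl)
    exact my_toE_ne_posInf z hz
  have hQb : (⊥ : EY Y) ∉ ⋃ x : X, F x + infSE C (Bx x) := by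
    intro h
    apply hQu
    unfold upCloE
    rw [if_pos h]
  have hB : ∀ x, Bx x ⊆ range (toE : Y → EY Y) := by
    intro x e he
    simp only [hBxdef, mem_iUnion, mem_singleton_iff] at he
    obtain ⟨v, hv, rfl⟩ := he
    exact ⟨_, rfl⟩
  have hQR := my_QR hC hCone hc F Bx hB hQb
  -- reindexing identity
  have hRR : (⋃ x : X, F x + Bx x)
      = ⋃ u : U, Au u + ({toE (bu u)} : Set (EY Y)) := by
    ext e
    simp only [mem_iUnion]
    constructor
    · rintro ⟨x, f, hf, p, hp, hsum⟩
      simp only [hBxdef, mem_iUnion, mem_singleton_iff] at hp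
      obtain ⟨v, hv, rfl⟩ := hp
      obtain ⟨g, hg, d, hd, rfl⟩ := hv
      refine ⟨-(g + d), f, ?_, toE (bu (-(g + d))), rfl, ?_⟩
      · refine mem_iUnion₂.2 ⟨x, ?_, hf⟩
        refine ⟨g, hg, ?_⟩
        refine Set.mem_sub.2 ⟨-d, ?_, -(g + d), rfl, by abel⟩
        rw [Set.mem_neg, neg_neg]; exact hd
      · have hb : bu (-(g + d)) = u' (g + d) • c := by
          rw [hbudef]
          simp only [map_neg, neg_smul, neg_neg]
      
        rw [hb]
        exact hsum
    · rintro ⟨u, f, hfA, p, hp, hsum⟩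
      rw [Set.mem_singleton_iff] at hp
      subst hp
      obtain ⟨x, hxS, hf⟩ := mem_iUnion₂.1 hfA
      obtain ⟨g, hgG, hgD⟩ := hxS
      obtain ⟨p', hp', q, hq, hpq⟩ := Set.mem_sub.1 hgD
      rw [Set.mem_singleton_iff] at hq
      rw [hq] at hpq
      rw [Set.mem_neg] at hp'
      refine ⟨x, f, hf, toE (u' (-u) • c), ?_, ?_⟩
      · refine mem_iUnion₂.2 ⟨-u, ⟨g, hgG, -p', hp', ?_⟩, rfl⟩
        show g + -p' = -u
        rw [← hpq]; abel
      · have hb : u' (-u) • c = bu u := by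
          rw [hbudef]
          simp only [map_neg, neg_smul]
        rw [hb]
        exact hsum
  have hR1u : upCloE C (⋃ u : U, Au u + ({toE (bu u)} : Set (EY Y))) ≠ univ := by
    rw [← hRR, ← hQR]
    exact hQu
  have hPR := my_PR hC hCone hc Au bu hR1u
  have hPW : (⋃ u : U, pertW C F G D u + ({toE (-(u' u • c))} : Set (EY Y)))
      = ⋃ u : U, infSE C (Au u) + ({toE (bu u)} : Set (EY Y)) := rfl
  have hfinal : infSE C
      (⋃ u : U, (pertW C F G D u + ({toE (-(u' u • c))} : Set (EY Y))))
      = dualObj C c F G D u' := by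
    rw [hPW, hdual]
    apply my_infSE_congr
    rw [hPR, ← hRR, hQR]
  constructor
  · rintro ⟨-, hy⟩
    rw [← hfinal]
    exact hy
  · intro hy
    refine ⟨hpos, ?_⟩
    rw [hfinal]
    exact hy
end
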